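/- arXiv:1901.07830 — 4 statements merged into one kernel-verified Lean document; each statement's English description precedes it below -/
import Mathlib

section
/- For all integers n ≥ 2 and 1 ≤ r ≤ n, the number of ordered D_n-partitions whose blocks, listed in order, have the form [C_1, −C_1, C_2, −C_2, …, C_r, −C_r] (so there is no zero-block and there are r pairs of nonzero blocks), whose first block C_1 is a singleton, and such that the total number of negative elements in C_1 ∪ C_2 ∪ ⋯ ∪ C_r is odd, equals n · 2^{n−1} · (r−1)! · S(n−1, r−1). -/
open Classical Finset

/-! ### Signed permutations (type B), window notation -/

/-- `w` is the window notation of a signed permutation of `{1,…,n}`. -/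
def IsSignedPerm {n : ℕ} (w : Fin n → ℤ) : Prop :=
  (∀ i, 1 ≤ |w i| ∧ |w i| ≤ (n : ℤ)) ∧ Function.Injective fun i => |w i|

/-- The value `β(i)` for `1 ≤ i ≤ n`, and `0` otherwise (so `β(0) = 0`). -/
def bVal {n : ℕ} (w : Fin n → ℤ) (i : ℕ) : ℤ :=
  if h : 1 ≤ i ∧ i ≤ n then w ⟨i - 1, by omega⟩ else 0

/-- Type `B` descent number: `#{i ∈ {0,…,n−1} : β(i) > β(i+1)}`, with `β(0) = 0`. -/
noncomputable def desB {n : ℕ} (w : Fin n → ℤ) : ℕ :=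
  ((Finset.range n).filter fun i => bVal w (i + 1) < bVal w i).card

/-- Type `B` Eulerian number `A_B(n,k)`. -/
noncomputable def EulB (n k : ℕ) : ℕ :=
  Nat.card { w : Fin n → ℤ // IsSignedPerm w ∧ desB w = k }

/-- Type `D` descent number: as in type `B` but with the convention `γ(0) = −γ(2)`. -/
noncomputable def desD {n : ℕ} (w : Fin n → ℤ) : ℕ :=
  ((Finset.range n).filter fun i =>
    bVal w (i + 1) < (if i = 0 then -(bVal w 2) else bVal w i)).card

/-- `w` has an even number of negative entries. -/
def IsEvenSigned {n : ℕ} (w : Fin n → ℤ) : Prop :=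
  Even ((Finset.univ.filter fun i => w i < 0)).card

/-- Type `D` Eulerian number `A_D(n,k)`. -/
noncomputable def EulD (n k : ℕ) : ℕ :=
  Nat.card { w : Fin n → ℤ // IsSignedPerm w ∧ IsEvenSigned w ∧ desD w = k }

/-! ### Set partitions of types B and D -/

/-- The negative `−C` of a block `C`. -/
def negSet (C : Finset ℤ) : Finset ℤ := C.image fun x => -x

/-- A `Bₙ`-partition: a set partition of `{−n,…,−1,1,…,n}` such that at most one block
satisfies `C = −C` (the zero-block), and `−C` is a block whenever `C` is. -/
structure BPartition (n : ℕ) where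
  blocks : Finset (Finset ℤ)
  cover : ∀ x : ℤ, (x ≠ 0 ∧ |x| ≤ (n : ℤ)) ↔ ∃ C ∈ blocks, x ∈ C
  nonempty : ∀ C ∈ blocks, C.Nonempty
  disj : ∀ C ∈ blocks, ∀ C' ∈ blocks, C ≠ C' → Disjoint C C'
  closed : ∀ C ∈ blocks, negSet C ∈ blocks
  zeroUnique : ∀ C ∈ blocks, ∀ C' ∈ blocks, negSet C = C → negSet C' = C' → C = C'

/-- A `Dₙ`-partition: a `Bₙ`-partition whose zero-block, if present, has at least
two positive elements. -/
def IsDPartition {n : ℕ} (P : BPartition n) : Prop :=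
  ∀ C ∈ P.blocks, negSet C = C → 2 ≤ (C.filter fun x => 0 < x).card

/-- `P` has exactly `r` pairs `{C, −C}` of nonzero blocks. -/
def hasPairs {n : ℕ} (P : BPartition n) (r : ℕ) : Prop :=
  (P.blocks.filter fun C => negSet C ≠ C).card = 2 * r

/-- Stirling number of the second kind of type `B`. -/
noncomputable def SB (n r : ℕ) : ℕ :=
  Nat.card { P : BPartition n // hasPairs P r }

/-- Stirling number of the second kind of type `D`. -/
noncomputable def SD (n r : ℕ) : ℕ :=
  Nat.card { P : BPartition n // IsDPartition P ∧ hasPairs P r }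

/-- An ordered `Bₙ`-partition: a `Bₙ`-partition with a linear order on its blocks in
which the zero-block (if present) comes first and `C, −C` are always adjacent. -/
structure OrderedBPartition (n : ℕ) where
  P : BPartition n
  order : List (Finset ℤ)
  nodup : order.Nodup
  same : order.toFinset = P.blocks
  zeroFirst : ∀ C ∈ P.blocks, negSet C = C → order[0]? = some C
  adjacent : ∀ C ∈ P.blocks, negSet C ≠ C →
    ∃ i : ℕ, (order[i]? = some C ∧ order[i+1]? = some (negSet C)) ∨
             (order[i]? = some (negSet C) ∧ order[i+1]? = some C)

/-! ### Classical Stirling and Eulerian numbers -/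

/-- The classical Stirling number of the second kind `S(n,r)`. -/
noncomputable def Stir (n r : ℕ) : ℕ :=
  Nat.card { P : Finpartition (Finset.univ : Finset (Fin n)) // P.parts.card = r }

/-- Number of descents of a permutation of `{1,…,n}`. -/
noncomputable def desA {n : ℕ} (σ : Equiv.Perm (Fin n)) : ℕ :=
  ((Finset.range (n - 1)).filter fun i =>
    ∃ h : i + 1 < n, σ ⟨i + 1, h⟩ < σ ⟨i, Nat.lt_of_succ_lt h⟩).card

/-- The classical Eulerian number `A(n,k)`: permutations with `k−1` descents
(and `A(n,0) = 0`). -/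
noncomputable def EulA (n k : ℕ) : ℕ :=
  if k = 0 then 0 else Nat.card { σ : Equiv.Perm (Fin n) // desA σ = k - 1 }

/-! ### Colored permutations -/

/-- `π` is (the window notation of) a colored permutation in `G_{m,n}`. -/
def IsColoredPerm {m n : ℕ} (π : Fin n → Fin n × ZMod m) : Prop :=
  Function.Bijective fun i => (π i).1

/-- The color order `a ≺ b` on the colored alphabet. -/
def colorLt {m n : ℕ} (a b : Fin n × ZMod m) : Prop :=
  b.2.val < a.2.val ∨ (a.2 = b.2 ∧ a.1 < b.1)

/-- The descent number `des_G` of a colored permutation. -/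
noncomputable def desG {m n : ℕ} (π : Fin n → Fin n × ZMod m) : ℕ :=
  ((Finset.range (n - 1)).filter fun i =>
    ∃ h : i + 1 < n, colorLt (π ⟨i + 1, h⟩) (π ⟨i, Nat.lt_of_succ_lt h⟩)).card
  + (if h : 0 < n then (if (π ⟨0, h⟩).2 ≠ 0 then 1 else 0) else 0)

/-- The Eulerian number `A_m(n,k)` of `G_{m,n}`. -/
noncomputable def EulG (m n k : ℕ) : ℕ :=
  Nat.card { π : Fin n → Fin n × ZMod m // IsColoredPerm π ∧ desG π = k }

/-- The shift `C^{[t]}` of a block of the colored alphabet. -/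
def shiftBlock {m n : ℕ} (t : ZMod m) (C : Finset (Fin n × ZMod m)) :
    Finset (Fin n × ZMod m) :=
  C.image fun p => (p.1, p.2 + t)

/-- A `G_{m,n}`-partition. -/
structure GPartition (m n : ℕ) where
  blocks : Finset (Finset (Fin n × ZMod m))
  cover : ∀ x : Fin n × ZMod m, ∃ C ∈ blocks, x ∈ C
  nonempty : ∀ C ∈ blocks, C.Nonempty
  disj : ∀ C ∈ blocks, ∀ C' ∈ blocks, C ≠ C' → Disjoint C C'
  closed : ∀ C ∈ blocks, shiftBlock 1 C ∈ blocks
  zeroUnique : ∀ C ∈ blocks, ∀ C' ∈ blocks,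
    shiftBlock 1 C = C → shiftBlock 1 C' = C' → C = C'

/-- The number of equivalence classes (orbits under shifting) of nonzero blocks. -/
noncomputable def numClasses {m n : ℕ} (P : GPartition m n) : ℕ :=
  ((P.blocks.filter fun C => shiftBlock 1 C ≠ C).image
    fun C => (Finset.range m).image fun t => shiftBlock (t : ZMod m) C).card

/-- Stirling number of the second kind `S_m(n,r)` for `G_{m,n}`. -/
noncomputable def SG (m n r : ℕ) : ℕ :=
  Nat.card { P : GPartition m n // numClasses P = r }

/-- An ordered `G_{m,n}`-partition. -/
structure OrderedGPartition (m n : ℕ) where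
  P : GPartition m n
  order : List (Finset (Fin n × ZMod m))
  nodup : order.Nodup
  same : order.toFinset = P.blocks
  zeroFirst : ∀ C ∈ P.blocks, shiftBlock 1 C = C → order[0]? = some C
  consec : ∀ C ∈ P.blocks, shiftBlock 1 C ≠ C →
    ∃ i : ℕ, ∃ s : ZMod m, ∀ t : ℕ, t < m →
      order[i + t]? = some (shiftBlock (s + (t : ZMod m)) C)

lemma mem_negSet {C : Finset ℤ} {x : ℤ} : x ∈ negSet C ↔ -x ∈ C := by
  constructor
  · intro h
    rcases Finset.mem_image.1 h with ⟨y, hy, rfl⟩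
    simpa using hy
  · intro h
    exact Finset.mem_image.2 ⟨-x, h, by ring⟩

lemma negSet_negSet (C : Finset ℤ) : negSet (negSet C) = C := by
  ext x; simp [mem_negSet]

lemma negSet_nonempty {C : Finset ℤ} (h : C.Nonempty) : (negSet C).Nonempty :=
  h.image _

/-- ordered partition condition -/
def OPC {m k : ℕ} (f : Fin k → Finset (Fin m)) : Prop :=
  (∀ j, (f j).Nonempty) ∧ ∀ x : Fin m, ∃! j, x ∈ f j

def iotaF {n : ℕ} (s : Fin n → Bool) (i : Fin n) : ℤ :=
  if s i then -((i : ℕ) + 1) else ((i : ℕ) + 1)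

lemma iotaF_natAbs {n} (s : Fin n → Bool) (i) : (iotaF s i).natAbs = (i : ℕ) + 1 := by
  unfold iotaF; split <;> omega

lemma iotaF_neg_iff {n} (s : Fin n → Bool) (i) : iotaF s i < 0 ↔ s i = true := by
  cases h : s i <;> simp [iotaF, h] <;> omega

lemma iotaF_ne_zero {n} (s : Fin n → Bool) (i) : iotaF s i ≠ 0 := by
  intro h
  have h2 := iotaF_natAbs s i
  rw [h] at h2; simp at h2

lemma iotaF_abs_le {n} (s : Fin n → Bool) (i) : |iotaF s i| ≤ (n : ℤ) := by
  have h := iotaF_natAbs s i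
  have h2 := i.isLt
  rw [Int.abs_eq_natAbs, h]
  exact_mod_cast h2

lemma iotaF_inj {n} (s : Fin n → Bool) : Function.Injective (iotaF s) := by
  intro i j h
  have h2 := congrArg Int.natAbs h
  rw [iotaF_natAbs, iotaF_natAbs] at h2
  exact Fin.ext (by omega)

lemma iotaF_eq_iotaF {n} {s s' : Fin n → Bool} {i : Fin n}
    (h : iotaF s i = iotaF s' i) : s i = s' i := by
  cases hs : s i <;> cases hs' : s' i <;> simp [iotaF, hs, hs'] at h ⊢ <;> omega

section Bf
variable {m k : ℕ}

def BfF (a : Fin (m+1)) (g : Fin k → Finset (Fin m)) : Fin (k+1) → Finset (Fin (m+1)) :=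
  Fin.cases {a} (fun j => (g j).image a.succAbove)

lemma BfF_zero (a : Fin (m+1)) (g : Fin k → Finset (Fin m)) : BfF a g 0 = {a} := rfl

lemma BfF_succ (a : Fin (m+1)) (g : Fin k → Finset (Fin m)) (j : Fin k) :
    BfF a g j.succ = (g j).image a.succAbove := by
  simp [BfF]

lemma BfF_nonempty (a : Fin (m+1)) {g : Fin k → Finset (Fin m)} (hg : OPC g)
    (j : Fin (k+1)) : (BfF a g j).Nonempty := by
  induction j using Fin.cases with
  | zero => exact ⟨a, by simp [BfF_zero]⟩
  | succ j' => rw [BfF_succ]; exact (hg.1 j').image _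

lemma BfF_unique (a : Fin (m+1)) {g : Fin k → Finset (Fin m)} (hg : OPC g)
    (i : Fin (m+1)) : ∃! j, i ∈ BfF a g j := by
  by_cases hi : i = a
  · refine ⟨0, by simp [BfF_zero, hi], ?_⟩
    intro j hj
    induction j using Fin.cases with
    | zero => rfl
    | succ j' =>
      exfalso
      rw [BfF_succ] at hj
      rcases Finset.mem_image.1 hj with ⟨y, _, h⟩
      exact Fin.succAbove_ne a y (h.trans hi)
  · obtain ⟨y, hy⟩ := Fin.exists_succAbove_eq hi
    obtain ⟨j, hj, hju⟩ := hg.2 y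
    refine ⟨j.succ, by
      show i ∈ BfF a g j.succ
      rw [BfF_succ]; exact Finset.mem_image.2 ⟨y, hj, hy⟩, ?_⟩
    intro j₂ hj₂
    induction j₂ using Fin.cases with
    | zero => exact absurd (by simpa [BfF_zero] using hj₂) hi
    | succ j₂' =>
      rw [BfF_succ] at hj₂
      rcases Finset.mem_image.1 hj₂ with ⟨y', hy', h'⟩
      have hyy : y' = y := Fin.succAbove_right_injective (h'.trans hy.symm)
      subst hyy
      rw [hju j₂' hy']

def CfF (s : Fin (m+1) → Bool) (a : Fin (m+1)) (g : Fin k → Finset (Fin m))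
    (j : Fin (k+1)) : Finset ℤ := (BfF a g j).image (iotaF s)

lemma mem_CfF {s : Fin (m+1) → Bool} {a : Fin (m+1)} {g : Fin k → Finset (Fin m)}
    {j : Fin (k+1)} {x : ℤ} :
    x ∈ CfF s a g j ↔ ∃ i, i ∈ BfF a g j ∧ iotaF s i = x := by
  simp [CfF, Finset.mem_image]

lemma CfF_nonempty (s : Fin (m+1) → Bool) (a : Fin (m+1)) {g : Fin k → Finset (Fin m)}
    (hg : OPC g) (j : Fin (k+1)) : (CfF s a g j).Nonempty :=
  (BfF_nonempty a hg j).image _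

lemma CfF_disjCC {s : Fin (m+1) → Bool} {a : Fin (m+1)} {g : Fin k → Finset (Fin m)}
    (hg : OPC g) {j j' : Fin (k+1)} (h : j ≠ j') :
    Disjoint (CfF s a g j) (CfF s a g j') := by
  rw [Finset.disjoint_left]
  intro x hx hx'
  obtain ⟨i, hi, hix⟩ := mem_CfF.1 hx
  obtain ⟨i', hi', hix'⟩ := mem_CfF.1 hx'
  have : i = i' := iotaF_inj s (hix.trans hix'.symm)
  subst this
  obtain ⟨j₀, _, hju⟩ := BfF_unique a hg i
  exact h ((hju j hi).trans (hju j' hi').symm)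

lemma CfF_disjCN (s : Fin (m+1) → Bool) (a : Fin (m+1)) (g : Fin k → Finset (Fin m))
    (j j' : Fin (k+1)) : Disjoint (CfF s a g j) (negSet (CfF s a g j')) := by
  rw [Finset.disjoint_left]
  intro x hx hx'
  obtain ⟨i, hi, hix⟩ := mem_CfF.1 hx
  obtain ⟨i', hi', hix'⟩ := mem_CfF.1 (mem_negSet.1 hx')
  have h1 := iotaF_natAbs s i
  have h2 := iotaF_natAbs s i'
  rw [hix] at h1
  rw [hix'] at h2
  have hii : i = i' := Fin.ext (by omega)
  subst hii
  have : x = -x := hix.symm.trans hix'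
  omega

lemma CfF_disjNN {s : Fin (m+1) → Bool} {a : Fin (m+1)} {g : Fin k → Finset (Fin m)}
    (hg : OPC g) {j j' : Fin (k+1)} (h : j ≠ j') :
    Disjoint (negSet (CfF s a g j)) (negSet (CfF s a g j')) := by
  rw [Finset.disjoint_left]
  intro x hx hx'
  exact Finset.disjoint_left.1 (CfF_disjCC hg h) (mem_negSet.1 hx) (mem_negSet.1 hx')

lemma CfF_ne_neg (s : Fin (m+1) → Bool) (a : Fin (m+1)) {g : Fin k → Finset (Fin m)}
    (hg : OPC g) (j j' : Fin (k+1)) : CfF s a g j ≠ negSet (CfF s a g j') := by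
  intro h
  obtain ⟨x, hx⟩ := CfF_nonempty s a hg j
  exact Finset.disjoint_left.1 (CfF_disjCN s a g j j') hx (h ▸ hx)

end Bf

section Ord
variable {m k : ℕ} (s : Fin (m+1) → Bool) (a : Fin (m+1)) (g : Fin k → Finset (Fin m))

def entF (t : Fin (2*(k+1))) : Finset ℤ :=
  if (t : ℕ) % 2 = 0 then CfF s a g ⟨(t : ℕ)/2, by have := t.isLt; omega⟩
  else negSet (CfF s a g ⟨(t : ℕ)/2, by have := t.isLt; omega⟩)

def ordFn : List (Finset ℤ) := List.ofFn (entF s a g)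

lemma ordFn_length : (ordFn s a g).length = 2*(k+1) := by rw [ordFn, List.length_ofFn]

lemma ordFn_get_even (j : ℕ) (hj : j < k+1) :
    (ordFn s a g)[2*j]? = some (CfF s a g ⟨j, hj⟩) := by
  have h2 : 2*j < 2*(k+1) := by omega
  have e1 : (2*j) % 2 = 0 := by omega
  have e2 : (2*j) / 2 = j := by omega
  rw [ordFn, List.getElem?_ofFn, dif_pos h2]
  show some (entF s a g ⟨2*j, h2⟩) = _
  simp only [entF]
  rw [if_pos e1]
  exact congrArg (fun z => some (CfF s a g z)) (Fin.ext e2)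

lemma ordFn_get_odd (j : ℕ) (hj : j < k+1) :
    (ordFn s a g)[2*j+1]? = some (negSet (CfF s a g ⟨j, hj⟩)) := by
  have h2 : 2*j+1 < 2*(k+1) := by omega
  have e1 : ¬((2*j+1) % 2 = 0) := by omega
  have e2 : (2*j+1) / 2 = j := by omega
  rw [ordFn, List.getElem?_ofFn, dif_pos h2]
  show some (entF s a g ⟨2*j+1, h2⟩) = _
  simp only [entF]
  rw [if_neg e1]
  exact congrArg (fun z => some (negSet (CfF s a g z))) (Fin.ext e2)

lemma mem_ordFn {X : Finset ℤ} :
    X ∈ ordFn s a g ↔ ∃ j : Fin (k+1), X = CfF s a g j ∨ X = negSet (CfF s a g j) := by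
  constructor
  · intro h
    rw [ordFn, List.mem_ofFn] at h
    obtain ⟨t, ht⟩ := h
    have hlt := t.isLt
    refine ⟨⟨(t : ℕ)/2, by omega⟩, ?_⟩
    by_cases hp : (t : ℕ) % 2 = 0
    · left; rw [← ht]; simp [entF, hp]
    · right; rw [← ht]; simp [entF, hp]
  · rintro ⟨j, h | h⟩
    · have := ordFn_get_even s a g j j.isLt
      subst h
      have h3 : (⟨(j:ℕ), j.isLt⟩ : Fin (k+1)) = j := Fin.ext rfl
      rw [h3] at this
      exact List.mem_of_getElem? this
    · have := ordFn_get_odd s a g j j.isLt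
      subst h
      have h3 : (⟨(j:ℕ), j.isLt⟩ : Fin (k+1)) = j := Fin.ext rfl
      rw [h3] at this
      exact List.mem_of_getElem? this

lemma ordFn_nodup {s : Fin (m+1) → Bool} {a : Fin (m+1)} {g : Fin k → Finset (Fin m)}
    (hg : OPC g) : (ordFn s a g).Nodup := by
  rw [ordFn, List.nodup_ofFn]
  intro t t' h
  by_contra hne
  have htv : (t : ℕ) ≠ (t' : ℕ) := fun hc => hne (Fin.ext hc)
  have h1 := t.isLt
  have h2 := t'.isLt
  unfold entF at h
  by_cases p1 : (t : ℕ) % 2 = 0 <;> by_cases p2 : (t' : ℕ) % 2 = 0 <;>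
    simp only [p1, p2, if_true, if_false, if_pos, if_neg, not_false_iff] at h
  · have hjj : (⟨(t:ℕ)/2, by omega⟩ : Fin (k+1)) ≠ ⟨(t':ℕ)/2, by omega⟩ := by
      intro hc
      have := congrArg Fin.val hc
      simp at this
      omega
    obtain ⟨x, hx⟩ := CfF_nonempty s a hg (⟨(t:ℕ)/2, by omega⟩ : Fin (k+1))
    exact Finset.disjoint_left.1 (CfF_disjCC hg hjj) hx (h ▸ hx)
  · exact CfF_ne_neg s a hg _ _ h
  · exact CfF_ne_neg s a hg _ _ h.symm
  · have hjj : (⟨(t:ℕ)/2, by omega⟩ : Fin (k+1)) ≠ ⟨(t':ℕ)/2, by omega⟩ := by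
      intro hc
      have := congrArg Fin.val hc
      simp at this
      omega
    obtain ⟨x, hx⟩ := negSet_nonempty (CfF_nonempty s a hg (⟨(t:ℕ)/2, by omega⟩ : Fin (k+1)))
    exact Finset.disjoint_left.1 (CfF_disjNN hg hjj) hx (h ▸ hx)

end Ord

section MkQ
variable {m k : ℕ} (s : Fin (m+1) → Bool) (a : Fin (m+1)) (g : Fin k → Finset (Fin m))

lemma ordFn_get_even' (j : Fin (k+1)) :
    (ordFn s a g)[2*(j:ℕ)]? = some (CfF s a g j) := by
  have h := ordFn_get_even s a g (j:ℕ) j.isLt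
  simpa using h

lemma ordFn_get_odd' (j : Fin (k+1)) :
    (ordFn s a g)[2*(j:ℕ)+1]? = some (negSet (CfF s a g j)) := by
  have h := ordFn_get_odd s a g (j:ℕ) j.isLt
  simpa using h

lemma filter_CfF_neg (j : Fin (k+1)) :
    (CfF s a g j).filter (fun x => x < 0)
      = ((BfF a g j).filter (fun i => s i = true)).image (iotaF s) := by
  ext x
  simp only [Finset.mem_filter, Finset.mem_image, mem_CfF]
  constructor
  · rintro ⟨⟨i, hi, rfl⟩, hneg⟩
    exact ⟨i, ⟨hi, (iotaF_neg_iff s i).1 hneg⟩, rfl⟩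
  · rintro ⟨i, ⟨hi, hsi⟩, rfl⟩
    exact ⟨⟨i, hi, rfl⟩, (iotaF_neg_iff s i).2 hsi⟩

lemma sum_neg_card {g : Fin k → Finset (Fin m)} (hg : OPC g) :
    ∑ j : Fin (k+1), ((CfF s a g j).filter (fun x => x < 0)).card
      = (Finset.univ.filter fun i => s i = true).card := by
  have h1 : ∀ j : Fin (k+1), ((CfF s a g j).filter (fun x => x < 0)).card
      = ((BfF a g j).filter (fun i => s i = true)).card := by
    intro j
    rw [filter_CfF_neg]
    exact Finset.card_image_of_injOn (iotaF_inj s).injOn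
  rw [Finset.sum_congr rfl (fun j _ => h1 j)]
  have hdisj : ∀ x ∈ (Finset.univ : Finset (Fin (k+1))), ∀ y ∈ Finset.univ, x ≠ y →
      Disjoint ((BfF a g x).filter (fun i => s i = true))
        ((BfF a g y).filter (fun i => s i = true)) := by
    intro j _ j' _ hne
    rw [Finset.disjoint_left]
    intro i hi hi'
    obtain ⟨j₀, _, hju⟩ := BfF_unique a hg i
    exact hne ((hju j (Finset.mem_filter.1 hi).1).trans (hju j' (Finset.mem_filter.1 hi').1).symm)
  rw [← Finset.card_biUnion hdisj]
  congr 1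
  ext i
  rw [Finset.mem_biUnion, Finset.mem_filter]
  constructor
  · rintro ⟨j, _, hj⟩
    exact ⟨Finset.mem_univ i, (Finset.mem_filter.1 hj).2⟩
  · rintro ⟨_, h⟩
    obtain ⟨j, hj, _⟩ := BfF_unique a hg i
    exact ⟨j, Finset.mem_univ _, Finset.mem_filter.2 ⟨hj, h⟩⟩

lemma mkQ_noself {g : Fin k → Finset (Fin m)} (hg : OPC g) :
    ∀ C ∈ (ordFn s a g).toFinset, negSet C ≠ C := by
  intro C hC
  rw [List.mem_toFinset, mem_ordFn] at hC
  obtain ⟨j, h | h⟩ := hC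
  · subst h
    intro h
    exact CfF_ne_neg s a hg j j h.symm
  · subst h
    intro h
    rw [negSet_negSet] at h
    exact CfF_ne_neg s a hg j j h

def mkQ {g : Fin k → Finset (Fin m)} (hg : OPC g) : OrderedBPartition (m+1) where
  P :=
  { blocks := (ordFn s a g).toFinset
    cover := by
      intro x
      constructor
      · rintro ⟨hx0, hxle⟩
        have hle : (x.natAbs : ℤ) ≤ ((m+1 : ℕ) : ℤ) := by
          rwa [Int.abs_eq_natAbs] at hxle
        have hle' : x.natAbs ≤ m+1 := by exact_mod_cast hle
        have hv1 : 1 ≤ x.natAbs := by omega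
        have hlt : x.natAbs - 1 < m + 1 := by omega
        set i : Fin (m+1) := ⟨x.natAbs - 1, hlt⟩ with hi
        obtain ⟨j, hj, _⟩ := BfF_unique a hg i
        have hNA : (iotaF s i).natAbs = x.natAbs := by
          rw [iotaF_natAbs]
          show x.natAbs - 1 + 1 = x.natAbs
          omega
        have hio : iotaF s i = x ∨ iotaF s i = -x := Int.natAbs_eq_natAbs_iff.1 hNA
        rcases hio with hio | hio
        · exact ⟨CfF s a g j, List.mem_toFinset.2 ((mem_ordFn s a g).2 ⟨j, Or.inl rfl⟩),
            mem_CfF.2 ⟨i, hj, hio⟩⟩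
        · refine ⟨negSet (CfF s a g j),
            List.mem_toFinset.2 ((mem_ordFn s a g).2 ⟨j, Or.inr rfl⟩), ?_⟩
          exact mem_negSet.2 (mem_CfF.2 ⟨i, hj, hio⟩)
      · rintro ⟨C, hC, hxC⟩
        rw [List.mem_toFinset, mem_ordFn] at hC
        obtain ⟨j, h | h⟩ := hC <;> subst h
        · obtain ⟨i, _, rfl⟩ := mem_CfF.1 hxC
          exact ⟨iotaF_ne_zero s i, iotaF_abs_le s i⟩
        · obtain ⟨i, _, hix⟩ := mem_CfF.1 (mem_negSet.1 hxC)
          have h0 := iotaF_ne_zero s i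
          have hl := iotaF_abs_le s i
          rw [hix] at h0 hl
          rw [abs_neg] at hl
          exact ⟨by omega, hl⟩
    nonempty := by
      intro C hC
      rw [List.mem_toFinset, mem_ordFn] at hC
      obtain ⟨j, h | h⟩ := hC <;> subst h
      · exact CfF_nonempty s a hg j
      · exact negSet_nonempty (CfF_nonempty s a hg j)
    disj := by
      intro C hC C' hC' hne
      rw [List.mem_toFinset, mem_ordFn] at hC hC'
      obtain ⟨j, h | h⟩ := hC <;> obtain ⟨j', h' | h'⟩ := hC' <;> subst h <;> subst h'
      · exact CfF_disjCC hg (fun hc => hne (by rw [hc]))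
      · exact CfF_disjCN s a g j j'
      · exact (CfF_disjCN s a g j' j).symm
      · exact CfF_disjNN hg (fun hc => hne (by rw [hc]))
    closed := by
      intro C hC
      rw [List.mem_toFinset, mem_ordFn] at hC
      obtain ⟨j, h | h⟩ := hC <;> subst h
      · exact List.mem_toFinset.2 ((mem_ordFn s a g).2 ⟨j, Or.inr rfl⟩)
      · rw [negSet_negSet]
        exact List.mem_toFinset.2 ((mem_ordFn s a g).2 ⟨j, Or.inl rfl⟩)
    zeroUnique := by
      intro C hC C' hC' h h'
      exact absurd h (mkQ_noself s a hg C hC) }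
  order := ordFn s a g
  nodup := ordFn_nodup hg
  same := rfl
  zeroFirst := by
    intro C hC h
    exact absurd h (mkQ_noself s a hg C hC)
  adjacent := by
    intro C hC _
    rw [List.mem_toFinset, mem_ordFn] at hC
    obtain ⟨j, h | h⟩ := hC <;> subst h
    · exact ⟨2*(j:ℕ), Or.inl ⟨ordFn_get_even' s a g j, ordFn_get_odd' s a g j⟩⟩
    · refine ⟨2*(j:ℕ), Or.inr ⟨?_, ordFn_get_odd' s a g j⟩⟩
      rw [negSet_negSet]
      exact ordFn_get_even' s a g j

end MkQ

section Count

lemma card_oddBool (m : ℕ) :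
    Nat.card {s : Fin (m+1) → Bool // Odd ((Finset.univ.filter fun i => s i = true).card)}
      = 2^m := by
  classical
  have hcnt : ∀ s : Fin (m+1) → Bool, ((Finset.univ.filter fun i => s i = true)).card
      = (if s 0 then 1 else 0) + ∑ i : Fin m, (if s i.succ then 1 else 0) := by
    intro s
    rw [Finset.card_filter]
    rw [Fin.sum_univ_succ]
  have hF : Function.Bijective
      (fun s : {s : Fin (m+1) → Bool // Odd ((Finset.univ.filter fun i => s i = true).card)} =>
        (fun i : Fin m => s.1 i.succ)) := by
    constructor
    · rintro ⟨s, hs⟩ ⟨s', hs'⟩ h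
      simp only at h
      have htail : ∀ i : Fin m, s i.succ = s' i.succ := fun i => congrFun h i
      have hsum : ∑ i : Fin m, (if s i.succ then 1 else 0)
          = ∑ i : Fin m, (if s' i.succ then 1 else 0) :=
        Finset.sum_congr rfl (fun i _ => by rw [htail i])
      rw [hcnt s] at hs
      rw [hcnt s'] at hs'
      have hhead : s 0 = s' 0 := by
        rcases hs with ⟨p, hp⟩
        rcases hs' with ⟨q, hq⟩
        by_contra hne
        cases h0 : s 0 <;> cases h0' : s' 0 <;>
          rw [h0] at hp <;> rw [h0'] at hq <;> simp_all <;> omega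
      apply Subtype.ext
      funext i
      induction i using Fin.cases with
      | zero => exact hhead
      | succ i' => exact htail i'
    · intro t
      set b : Bool := decide (Even (∑ i : Fin m, (if t i then 1 else 0))) with hb
      refine ⟨⟨Fin.cases b t, ?_⟩, ?_⟩
      · rw [hcnt]
        simp only [Fin.cases_zero, Fin.cases_succ]
        rcases Nat.even_or_odd (∑ i : Fin m, (if t i then 1 else 0)) with he | ho
        · have hb' : b = true := by rw [hb]; exact decide_eq_true he
          rw [hb']
          rcases he with ⟨p, hp⟩
          show Odd ((1:ℕ) + ∑ i : Fin m, (if t i then 1 else 0))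
          rw [hp]
          show Odd (1 + (p + p))
          exact ⟨p, by omega⟩
        · have hb' : b = false := by
            rw [hb]
            exact decide_eq_false (Nat.not_even_iff_odd.2 ho)
          rw [hb']
          rcases ho with ⟨p, hp⟩
          show Odd ((0:ℕ) + ∑ i : Fin m, (if t i then 1 else 0))
          rw [hp]
          show Odd (0 + (2*p+1))
          exact ⟨p, by omega⟩
      · funext i
        simp
  calc Nat.card {s : Fin (m+1) → Bool // Odd ((Finset.univ.filter fun i => s i = true).card)}
      = Nat.card (Fin m → Bool) := Nat.card_eq_of_bijective _ hF
    _ = 2^m := by simp [Nat.card_eq_fintype_card]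

end Count

section CountOPC

instance finpartFinite (m : ℕ) : Finite (Finpartition (Finset.univ : Finset (Fin m))) :=
  Finite.of_injective Finpartition.parts (fun P Q h => Finpartition.ext h)

lemma OPC_inj {m k : ℕ} {g : Fin k → Finset (Fin m)} (hg : OPC g) :
    Function.Injective g := by
  intro j j' h
  obtain ⟨x, hx⟩ := hg.1 j
  obtain ⟨j₀, _, hju⟩ := hg.2 x
  have hx' : x ∈ g j' := by rw [← h]; exact hx
  exact (hju j hx).trans (hju j' hx').symm

lemma card_OPC (m k : ℕ) :
    Nat.card {g : Fin k → Finset (Fin m) // OPC g} = Nat.factorial k * Stir m k := by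
  classical
  set T := {P : Finpartition (Finset.univ : Finset (Fin m)) // P.parts.card = k} with hT
  have hG : Function.Bijective
      (fun x : Σ P : T, (Fin k ≃ {C // C ∈ P.1.parts}) =>
        (⟨fun j => (x.2 j).1, by
          constructor
          · intro j
            exact x.1.1.nonempty_of_mem_parts (x.2 j).2
          · intro y
            have hy : y ∈ (Finset.univ : Finset (Fin m)) := Finset.mem_univ y
            obtain ⟨t, ⟨ht, hyt⟩, htu⟩ := x.1.1.existsUnique_mem hy
            refine ⟨x.2.symm ⟨t, ht⟩, ?_, ?_⟩
            · show y ∈ (x.2 (x.2.symm ⟨t, ht⟩)).1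
              rw [Equiv.apply_symm_apply]
              exact hyt
            · intro j hj
              have : (x.2 j).1 = t := htu _ ⟨(x.2 j).2, hj⟩
              have h2 : x.2 j = ⟨t, ht⟩ := Subtype.ext this
              rw [← h2, Equiv.symm_apply_apply]⟩ :
          {g : Fin k → Finset (Fin m) // OPC g})) := by
    constructor
    · rintro ⟨⟨P, hP⟩, e⟩ ⟨⟨P', hP'⟩, e'⟩ h
      have hfun : ∀ j, (e j).1 = (e' j).1 := by
        intro j
        exact congrFun (congrArg Subtype.val h) j
      have hparts : ∀ (Q : Finpartition (Finset.univ : Finset (Fin m)))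
          (f : Fin k ≃ {C // C ∈ Q.parts}),
          Q.parts = Finset.univ.image (fun j => (f j).1) := by
        intro Q f
        apply Finset.ext
        intro C
        constructor
        · intro hC
          exact Finset.mem_image.2 ⟨f.symm ⟨C, hC⟩, Finset.mem_univ _,
            by rw [Equiv.apply_symm_apply]⟩
        · intro hC
          obtain ⟨j, _, hj⟩ := Finset.mem_image.1 hC
          rw [← hj]
          exact (f j).2
      have hPP : P = P' := by
        apply Finpartition.ext
        rw [hparts P e, hparts P' e']
        exact Finset.image_congr (fun j _ => hfun j)
      subst hPP
      have : e = e' := by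
        apply Equiv.ext
        intro j
        exact Subtype.ext (hfun j)
      subst this
      rfl
    · rintro ⟨g, hg⟩
      have hginj : Function.Injective g := OPC_inj hg
      have hpd : (↑(Finset.univ.image g) : Set (Finset (Fin m))).PairwiseDisjoint id := by
        intro C hC D hD hne
        simp only [Finset.coe_image, Set.mem_image] at hC hD
        obtain ⟨j, _, rfl⟩ := hC
        obtain ⟨j', _, rfl⟩ := hD
        have hjj : j ≠ j' := fun hc => hne (by rw [hc])
        rw [Function.onFun, Finset.disjoint_left]
        intro y hy hy'
        obtain ⟨j₀, _, hju⟩ := hg.2 y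
        exact hjj ((hju j hy).trans (hju j' hy').symm)
      have hsup : (Finset.univ.image g).sup id = (Finset.univ : Finset (Fin m)) := by
        apply Finset.ext
        intro y
        simp only [Finset.mem_sup, Finset.mem_univ, iff_true, Finset.mem_image, id]
        obtain ⟨j, hj, _⟩ := hg.2 y
        exact ⟨g j, ⟨j, trivial, rfl⟩, hj⟩
      have hnb : ⊥ ∉ Finset.univ.image g := by
        rw [Finset.bot_eq_empty]
        intro hc
        obtain ⟨j, _, hj⟩ := Finset.mem_image.1 hc
        obtain ⟨y, hy⟩ := hg.1 j
        rw [hj] at hy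
        exact absurd hy (Finset.notMem_empty y)
      set P : Finpartition (Finset.univ : Finset (Fin m)) :=
        ⟨Finset.univ.image g, (Finset.supIndep_iff_pairwiseDisjoint).2 hpd, hsup, hnb⟩ with hPdef
      have hPcard : P.parts.card = k := by
        show (Finset.univ.image g).card = k
        rw [Finset.card_image_of_injective _ hginj, Finset.card_univ, Fintype.card_fin]
      have hbij : Function.Bijective
          (fun j : Fin k => (⟨g j, Finset.mem_image_of_mem g (Finset.mem_univ j)⟩ :
            {C // C ∈ P.parts})) := by
        constructor
        · intro j j' h
          exact hginj (congrArg Subtype.val h)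
        · rintro ⟨C, hC⟩
          obtain ⟨j, _, hj⟩ := Finset.mem_image.1 hC
          exact ⟨j, Subtype.ext hj⟩
      refine ⟨⟨⟨P, hPcard⟩, Equiv.ofBijective _ hbij⟩, ?_⟩
      apply Subtype.ext
      funext j
      rfl
  have h1 : Nat.card (Σ P : T, (Fin k ≃ {C // C ∈ P.1.parts}))
      = Nat.card {g : Fin k → Finset (Fin m) // OPC g} := Nat.card_eq_of_bijective _ hG
  rw [← h1]
  letI : Fintype (Finpartition (Finset.univ : Finset (Fin m))) := Fintype.ofFinite _
  letI : Fintype T := Fintype.ofFinite _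
  rw [Nat.card_eq_fintype_card, Fintype.card_sigma]
  have h2 : ∀ P : T, Fintype.card (Fin k ≃ {C // C ∈ P.1.parts}) = Nat.factorial k := by
    intro P
    have hc : Fintype.card {C // C ∈ P.1.parts} = k := by
      rw [Fintype.card_coe]
      exact P.2
    have e0 : Fin k ≃ {C // C ∈ P.1.parts} :=
      (Fintype.equivFinOfCardEq hc).symm
    rw [Fintype.card_equiv e0, Fintype.card_fin]
  rw [Finset.sum_congr rfl (fun P _ => h2 P)]
  rw [Finset.sum_const, Finset.card_univ, smul_eq_mul]
  rw [mul_comm]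
  congr 1
  rw [Stir]
  exact Nat.card_eq_fintype_card.symm

end CountOPC

section Master
variable {m k : ℕ}

def Dty (m k : ℕ) := {p : (Fin (m+1) → Bool) × Fin (m+1) × (Fin k → Finset (Fin m)) //
  Odd ((Finset.univ.filter fun i => p.1 i = true).card) ∧ OPC p.2.2}

lemma card_Dty (m k : ℕ) :
    Nat.card (Dty m k) = (m+1) * 2^m * Nat.factorial k * Stir m k := by
  have e : Dty m k ≃
      {s : Fin (m+1) → Bool // Odd ((Finset.univ.filter fun i => s i = true).card)}
      × Fin (m+1) × {g : Fin k → Finset (Fin m) // OPC g} :=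
    { toFun := fun d => (⟨d.1.1, d.2.1⟩, d.1.2.1, ⟨d.1.2.2, d.2.2⟩)
      invFun := fun x => ⟨(x.1.1, x.2.1, x.2.2.1), x.1.2, x.2.2.2⟩
      left_inv := fun d => rfl
      right_inv := fun x => rfl }
  rw [Nat.card_congr e, Nat.card_prod, Nat.card_prod, card_oddBool, card_OPC,
    Nat.card_eq_fintype_card, Fintype.card_fin]
  ring

def QCond (m k : ℕ) (Q : OrderedBPartition (m+1)) : Prop :=
  IsDPartition Q.P ∧ (∀ C ∈ Q.P.blocks, negSet C ≠ C) ∧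
  Q.order.length = 2 * (k+1) ∧
  (∀ i < k+1, Q.order[2 * i + 1]? = some (negSet (Q.order.getD (2 * i) ∅))) ∧
  (∃ a : ℤ, Q.order[0]? = some ({a} : Finset ℤ)) ∧
  Odd (∑ i ∈ Finset.range (k+1), ((Q.order.getD (2 * i) ∅).filter fun x => x < 0).card)

lemma getD_ordFn (s : Fin (m+1) → Bool) (a : Fin (m+1)) (g : Fin k → Finset (Fin m))
    (j : Fin (k+1)) : (ordFn s a g).getD (2*(j:ℕ)) ∅ = CfF s a g j := by
  rw [List.getD_eq_getElem?_getD, ordFn_get_even' s a g j]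
  rfl

noncomputable def FF (m k : ℕ) (d : Dty m k) : OrderedBPartition (m+1) :=
  mkQ d.1.1 d.1.2.1 (g := d.1.2.2) d.2.2

lemma FF_cond (m k : ℕ) (d : Dty m k) : QCond m k (FF m k d) := by
  obtain ⟨⟨s, a, g⟩, hodd, hg⟩ := d
  refine ⟨?_, ?_, ?_, ?_, ?_, ?_⟩
  · intro C hC h
    exact absurd h (mkQ_noself s a hg C hC)
  · intro C hC
    exact mkQ_noself s a hg C hC
  · exact ordFn_length s a g
  · intro i hi
    have hD : (ordFn s a g).getD (2*i) ∅ = CfF s a g ⟨i, hi⟩ := getD_ordFn s a g ⟨i, hi⟩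
    show (ordFn s a g)[2*i+1]? = some (negSet ((ordFn s a g).getD (2*i) ∅))
    rw [hD]
    exact ordFn_get_odd s a g i hi
  · refine ⟨iotaF s a, ?_⟩
    have he := ordFn_get_even s a g 0 (Nat.succ_pos k)
    have h0 : CfF s a g ⟨0, Nat.succ_pos k⟩ = {iotaF s a} := by
      have hb : BfF a g ⟨0, Nat.succ_pos k⟩ = {a} := BfF_zero a g
      rw [CfF, hb, Finset.image_singleton]
    show (ordFn s a g)[0]? = _
    have h00 : (2:ℕ)*0 = 0 := rfl
    rw [← h00, he, h0]
  · show Odd (∑ i ∈ Finset.range (k+1), (((ordFn s a g).getD (2*i) ∅).filter fun x => x < 0).card)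
    rw [← Fin.sum_univ_eq_sum_range (fun i => (((ordFn s a g).getD (2*i) ∅).filter fun x => x < 0).card) (k+1)]
    rw [Finset.sum_congr rfl (fun j (_ : j ∈ Finset.univ) => by rw [getD_ordFn s a g j])]
    rw [sum_neg_card s a hg]
    exact hodd

lemma OBP_ext {n : ℕ} {Q Q' : OrderedBPartition n} (hP : Q.P.blocks = Q'.P.blocks)
    (ho : Q.order = Q'.order) : Q = Q' := by
  obtain ⟨⟨b, c1, c2, c3, c4, c5⟩, o, h1, h2, h3, h4⟩ := Q
  obtain ⟨⟨b', c1', c2', c3', c4', c5'⟩, o', h1', h2', h3', h4'⟩ := Q'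
  simp only at hP ho
  subst hP
  subst ho
  rfl

end Master

lemma FF_inj (m k : ℕ) : Function.Injective (fun d : Dty m k => FF m k d) := by
  rintro ⟨⟨s, a, g⟩, hodd, hg⟩ ⟨⟨s', a', g'⟩, hodd', hg'⟩ h
  simp only [FF] at h
  have horder : ordFn s a g = ordFn s' a' g' := congrArg OrderedBPartition.order h
  have hC : ∀ j : Fin (k+1), CfF s a g j = CfF s' a' g' j := by
    intro j
    have h1 := ordFn_get_even' s a g j
    have h2 := ordFn_get_even' s' a' g' j
    rw [horder] at h1
    exact Option.some.inj (h1.symm.trans h2)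
  have ha : a = a' := by
    have h0 : CfF s a g 0 = {iotaF s a} := by rw [CfF, BfF_zero, Finset.image_singleton]
    have h0' : CfF s' a' g' 0 = {iotaF s' a'} := by rw [CfF, BfF_zero, Finset.image_singleton]
    have hE := hC 0
    rw [h0, h0'] at hE
    have hii : iotaF s a = iotaF s' a' := Finset.singleton_injective hE
    have h1 := iotaF_natAbs s a
    have h2 := iotaF_natAbs s' a'
    rw [hii] at h1
    exact Fin.ext (by omega)
  subst ha
  have hs : s = s' := by
    funext i
    obtain ⟨j, hj, _⟩ := BfF_unique a hg i
    have hx : iotaF s i ∈ CfF s' a g' j := by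
      rw [← hC j]; exact mem_CfF.2 ⟨i, hj, rfl⟩
    obtain ⟨i', hi', he⟩ := mem_CfF.1 hx
    have h1 := iotaF_natAbs s' i'
    rw [he] at h1
    have h2 := iotaF_natAbs s i
    have hii : i' = i := Fin.ext (by omega)
    subst hii
    exact (iotaF_eq_iotaF he).symm
  subst hs
  have hgg : g = g' := by
    funext j
    apply Finset.image_injective (Fin.succAbove_right_injective (p := a))
    have hB : BfF a g j.succ = BfF a g' j.succ :=
      Finset.image_injective (iotaF_inj s) (hC j.succ)
    rw [← BfF_succ a g j, ← BfF_succ a g' j]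
    exact hB
  subst hgg
  rfl

lemma FF_surj_aux (m k : ℕ) (Q : OrderedBPartition (m+1)) (Cq : Fin (k+1) → Finset ℤ)
    (hLen : Q.order.length = 2*(k+1))
    (h1 : ∀ j : Fin (k+1), Q.order[(2*(j:ℕ))]? = some (Cq j))
    (h2 : ∀ j : Fin (k+1), Q.order[2*(j:ℕ)+1]? = some (negSet (Cq j)))
    (hSing : ∃ c : ℤ, Cq 0 = {c})
    (hOdd : Odd (∑ j : Fin (k+1), ((Cq j).filter fun x => x < 0).card)) :
    ∃ d : Dty m k, FF m k d = Q := by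
  classical
  have hmemblk : ∀ (t : ℕ) (X : Finset ℤ), Q.order[t]? = some X → X ∈ Q.P.blocks := by
    intro t X hX
    rw [← Q.same, List.mem_toFinset]
    exact List.mem_of_getElem? hX
  have key : ∀ (t t' : ℕ) (X Y : Finset ℤ), t ≠ t' →
      Q.order[t]? = some X → Q.order[t']? = some Y → ∀ x, x ∈ X → x ∈ Y → False := by
    intro t t' X Y hne hX hY x hxX hxY
    obtain ⟨htl, htv⟩ := List.getElem?_eq_some_iff.1 hX
    obtain ⟨htl', htv'⟩ := List.getElem?_eq_some_iff.1 hY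
    have hXY : X ≠ Y := by
      intro hE
      apply hne
      exact (Q.nodup.getElem_inj_iff (hi := htl) (hj := htl')).1 (by rw [htv, htv', hE])
    exact Finset.disjoint_left.1
      (Q.P.disj X (hmemblk _ _ hX) Y (hmemblk _ _ hY) hXY) hxX hxY
  have u1 : ∀ (j j' : Fin (k+1)) (x : ℤ), x ∈ Cq j → x ∈ Cq j' → j = j' := by
    intro j j' x hx hx'
    by_contra hne
    have hvne : 2*(j:ℕ) ≠ 2*(j':ℕ) := by
      have hv : (j:ℕ) ≠ (j':ℕ) := fun hc => hne (Fin.ext hc)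
      omega
    exact key _ _ _ _ hvne (h1 j) (h1 j') x hx hx'
  have u2 : ∀ (j j' : Fin (k+1)) (x : ℤ), x ∈ Cq j → -x ∈ Cq j' → False := by
    intro j j' x hx hx'
    exact key (2*(j:ℕ)) (2*(j':ℕ)+1) _ _ (by omega) (h1 j) (h2 j') x hx (mem_negSet.2 hx')
  have hbound : ∀ (j : Fin (k+1)) (x : ℤ), x ∈ Cq j → x ≠ 0 ∧ x.natAbs ≤ m+1 := by
    intro j x hx
    obtain ⟨h0, habs⟩ := (Q.P.cover x).2 ⟨Cq j, hmemblk _ _ (h1 j), hx⟩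
    refine ⟨h0, ?_⟩
    rw [Int.abs_eq_natAbs] at habs
    exact_mod_cast habs
  have hcov : ∀ i : Fin (m+1), ∃ j : Fin (k+1),
      ((i:ℕ)+1 : ℤ) ∈ Cq j ∨ -((i:ℕ)+1 : ℤ) ∈ Cq j := by
    intro i
    have hx0 : ((i:ℕ)+1 : ℤ) ≠ 0 := by omega
    have hxa : |((i:ℕ)+1 : ℤ)| ≤ ((m+1 : ℕ) : ℤ) := by
      have hil := i.isLt
      rw [abs_of_nonneg (by positivity)]
      push_cast
      omega
    obtain ⟨C, hCb, hxC⟩ := (Q.P.cover _).1 ⟨hx0, hxa⟩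
    rw [← Q.same, List.mem_toFinset, List.mem_iff_getElem?] at hCb
    obtain ⟨t, ht⟩ := hCb
    have htl : t < 2*(k+1) := by
      have := (List.getElem?_eq_some_iff.1 ht).1
      omega
    refine ⟨⟨t/2, by omega⟩, ?_⟩
    by_cases hp : t % 2 = 0
    · have he : t = 2*(t/2) := by omega
      rw [he] at ht
      have hCq : Cq ⟨t/2, by omega⟩ = C :=
        Option.some.inj ((h1 ⟨t/2, by omega⟩).symm.trans ht)
      left; rw [hCq]; exact hxC
    · have he : t = 2*(t/2)+1 := by omega
      rw [he] at ht
      have hCq : negSet (Cq ⟨t/2, by omega⟩) = C :=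
        Option.some.inj ((h2 ⟨t/2, by omega⟩).symm.trans ht)
      right
      rw [← hCq] at hxC
      exact mem_negSet.1 hxC
  obtain ⟨c, hc0⟩ := hSing
  have hcmem : c ∈ Cq 0 := by rw [hc0]; exact Finset.mem_singleton_self c
  obtain ⟨hc_ne, hc_le⟩ := hbound 0 c hcmem
  set a : Fin (m+1) := ⟨c.natAbs - 1, by omega⟩ with hadef
  have hnatc : (a:ℕ) + 1 = c.natAbs := by
    show c.natAbs - 1 + 1 = c.natAbs; omega
  set s : Fin (m+1) → Bool :=
    fun i => decide (∃ j : Fin (k+1), -((i:ℕ)+1 : ℤ) ∈ Cq j) with hsdef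
  have hsiff : ∀ i : Fin (m+1),
      s i = true ↔ ∃ j : Fin (k+1), -((i:ℕ)+1 : ℤ) ∈ Cq j := by
    intro i
    rw [hsdef]
    exact decide_eq_true_iff
  set g : Fin k → Finset (Fin m) := fun j => Finset.univ.filter
    (fun y => (((a.succAbove y : Fin (m+1)) : ℕ)+1 : ℤ) ∈ Cq j.succ ∨
      -(((a.succAbove y : Fin (m+1)) : ℕ)+1 : ℤ) ∈ Cq j.succ) with hgdef
  have hgmem : ∀ (j : Fin k) (y : Fin m), y ∈ g j ↔
      ((((a.succAbove y : Fin (m+1)) : ℕ)+1 : ℤ) ∈ Cq j.succ ∨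
        -(((a.succAbove y : Fin (m+1)) : ℕ)+1 : ℤ) ∈ Cq j.succ) := by
    intro j y
    rw [hgdef]
    simp only [Finset.mem_filter, Finset.mem_univ, true_and]
  have claim : ∀ j : Fin (k+1), CfF s a g j = Cq j := by
    intro j
    apply Finset.ext
    intro x
    rw [mem_CfF]
    constructor
    · rintro ⟨i, hiB, rfl⟩
      induction j using Fin.cases with
      | zero =>
        rw [BfF_zero, Finset.mem_singleton] at hiB
        subst hiB
        rw [hc0, Finset.mem_singleton]
        have hca : ((a:ℕ) : ℤ) + 1 = (c.natAbs : ℤ) := by exact_mod_cast hnatc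
        rcases Int.natAbs_eq c with hsign | hsign
        · have hsa : s a = false := by
            by_contra hT
            rw [Bool.not_eq_false] at hT
            obtain ⟨j', hj'⟩ := (hsiff a).1 hT
            apply u2 (0 : Fin (k+1)) j' c hcmem
            have hcc : -c = -((((a:ℕ)) : ℤ)+1) := by omega
            rw [hcc]
            exact hj'
          rw [iotaF, hsa]
          show ((a:ℕ) : ℤ) + 1 = c
          omega
        · have hsa : s a = true := by
            apply (hsiff a).2
            refine ⟨0, ?_⟩
            have hcc : -((((a:ℕ)) : ℤ)+1) = c := by omega
            rw [hcc]
            exact hcmem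
          rw [iotaF, hsa]
          show -(((a:ℕ) : ℤ) + 1) = c
          omega
      | succ j' =>
        rw [BfF_succ] at hiB
        obtain ⟨y, hy, hyi⟩ := Finset.mem_image.1 hiB
        rw [hgmem] at hy
        rw [hyi] at hy
        cases hst : s i with
        | false =>
          rw [iotaF, hst]
          show ((i:ℕ) : ℤ) + 1 ∈ Cq j'.succ
          rcases hy with hy | hy
          · exact hy
          · exfalso
            have hT : s i = true := (hsiff i).2 ⟨j'.succ, hy⟩
            rw [hst] at hT
            exact Bool.false_ne_true hT
        | true =>
          rw [iotaF, hst]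
          show -(((i:ℕ) : ℤ) + 1) ∈ Cq j'.succ
          rcases hy with hy | hy
          · exfalso
            obtain ⟨j'', hj''⟩ := (hsiff i).1 hst
            exact u2 j'.succ j'' _ hy hj''
          · exact hy
    · intro hx
      obtain ⟨hx0, hxa⟩ := hbound j x hx
      have hxa1 : 1 ≤ x.natAbs := by omega
      have hlt : x.natAbs - 1 < m+1 := by omega
      have hiv : ((⟨x.natAbs - 1, hlt⟩ : Fin (m+1)) : ℕ) + 1 = x.natAbs := by
        show x.natAbs - 1 + 1 = x.natAbs; omega
      have hxpm : x = (((⟨x.natAbs - 1, hlt⟩ : Fin (m+1)) : ℕ) : ℤ) + 1 ∨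
          x = -((((⟨x.natAbs - 1, hlt⟩ : Fin (m+1)) : ℕ) : ℤ) + 1) := by
        rcases Int.natAbs_eq x with h | h
        · left; omega
        · right; omega
      have hsx : iotaF s ⟨x.natAbs - 1, hlt⟩ = x := by
        rcases hxpm with h | h
        · have hsa : s ⟨x.natAbs - 1, hlt⟩ = false := by
            by_contra hT
            rw [Bool.not_eq_false] at hT
            obtain ⟨j'', hj''⟩ := (hsiff _).1 hT
            apply u2 j j'' x hx
            have hxn : -x = -((((⟨x.natAbs - 1, hlt⟩ : Fin (m+1)) : ℕ) : ℤ) + 1) := by omega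
            rw [hxn]
            exact hj''
          rw [iotaF, hsa]
          show (((⟨x.natAbs - 1, hlt⟩ : Fin (m+1)) : ℕ) : ℤ) + 1 = x
          omega
        · have hsa : s ⟨x.natAbs - 1, hlt⟩ = true := by
            apply (hsiff _).2
            exact ⟨j, by rw [← h]; exact hx⟩
          rw [iotaF, hsa]
          show -((((⟨x.natAbs - 1, hlt⟩ : Fin (m+1)) : ℕ) : ℤ) + 1) = x
          omega
      refine ⟨⟨x.natAbs - 1, hlt⟩, ?_, hsx⟩
      induction j using Fin.cases with
      | zero =>
        rw [BfF_zero, Finset.mem_singleton]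
        have hxc : x = c := by
          rw [hc0, Finset.mem_singleton] at hx
          exact hx
        apply Fin.ext
        show x.natAbs - 1 = c.natAbs - 1
        rw [hxc]
      | succ j' =>
        rw [BfF_succ]
        have hia : (⟨x.natAbs - 1, hlt⟩ : Fin (m+1)) ≠ a := by
          intro hE
          have hval : x.natAbs - 1 = c.natAbs - 1 := congrArg Fin.val hE
          have hnn : x.natAbs = c.natAbs := by omega
          have hxc : x = c ∨ x = -c := by omega
          rcases hxc with h | h
          · have := u1 j'.succ 0 c (by rw [← h]; exact hx) hcmem
            exact Fin.succ_ne_zero j' this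
          · apply u2 j'.succ 0 x hx
            rw [show -x = c by omega]
            exact hcmem
        obtain ⟨y, hy⟩ := Fin.exists_succAbove_eq hia
        refine Finset.mem_image.2 ⟨y, ?_, hy⟩
        rw [hgmem, hy]
        rcases hxpm with h | h
        · left; rw [← h]; exact hx
        · right; rw [← h]; exact hx
  have hgOPC : OPC g := by
    constructor
    · intro j'
      have hne := Q.P.nonempty (Cq j'.succ) (hmemblk _ _ (h1 j'.succ))
      rw [← claim j'.succ] at hne
      obtain ⟨x, hxm⟩ := hne
      obtain ⟨i, hiB, _⟩ := mem_CfF.1 hxm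
      rw [BfF_succ] at hiB
      obtain ⟨y, hy, _⟩ := Finset.mem_image.1 hiB
      exact ⟨y, hy⟩
    · intro y
      obtain ⟨j, hj⟩ := hcov (a.succAbove y)
      have hj0 : j ≠ 0 := by
        intro hE
        subst hE
        have hia : (a:ℕ) = ((a.succAbove y : Fin (m+1)) : ℕ) := by
          rcases hj with h | h
          · rw [hc0, Finset.mem_singleton] at h
            have := congrArg Int.natAbs h
            omega
          · rw [hc0, Finset.mem_singleton] at h
            have := congrArg Int.natAbs h
            omega
        exact Fin.succAbove_ne a y (Fin.ext hia.symm)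
      obtain ⟨j₀, hj₀⟩ := Fin.eq_succ_of_ne_zero hj0
      rw [hj₀] at hj
      refine ⟨j₀, ?_, ?_⟩
      · show y ∈ g j₀
        rw [hgmem]
        exact hj
      · intro jb hjb
        rw [hgmem] at hjb
        have hsucc : jb.succ = j₀.succ := by
          rcases hjb with h | h <;> rcases hj with h' | h'
          · exact u1 _ _ _ h h'
          · exact (u2 jb.succ j₀.succ _ h h').elim
          · exact (u2 j₀.succ jb.succ _ h' h).elim
          · have := u1 _ _ _ h h'
            exact this
        exact Fin.succ_injective _ hsucc
  have hOdd2 : Odd ((Finset.univ.filter fun i => s i = true).card) := by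
    have hOdd3 : Odd (∑ j : Fin (k+1), ((CfF s a g j).filter fun x => x < 0).card) := by
      rw [Finset.sum_congr rfl (fun j (_ : j ∈ Finset.univ) => by rw [claim j])]
      exact hOdd
    rwa [sum_neg_card s a hgOPC] at hOdd3
  refine ⟨⟨(s, a, g), hOdd2, hgOPC⟩, ?_⟩
  have horder : ordFn s a g = Q.order := by
    apply List.ext_getElem?
    intro t
    by_cases ht : t < 2*(k+1)
    · rcases Nat.even_or_odd t with ⟨u, hu⟩ | ⟨u, hu⟩
      · have hu' : u < k+1 := by omega
        have h2u : t = 2*u := by omega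
        rw [h2u, ordFn_get_even s a g u hu', claim ⟨u, hu'⟩]
        exact (h1 ⟨u, hu'⟩).symm
      · have hu' : u < k+1 := by omega
        have h2u : t = 2*u+1 := by omega
        rw [h2u, ordFn_get_odd s a g u hu', claim ⟨u, hu'⟩]
        exact (h2 ⟨u, hu'⟩).symm
    · rw [List.getElem?_eq_none (l := ordFn s a g) (by rw [ordFn_length]; omega),
        List.getElem?_eq_none (by rw [hLen]; omega)]
  apply OBP_ext
  · show (ordFn s a g).toFinset = Q.P.blocks
    rw [horder, Q.same]
  · exact horder

lemma FF_surj (m k : ℕ) (Q : OrderedBPartition (m+1)) (hQ : QCond m k Q) :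
    ∃ d : Dty m k, FF m k d = Q := by
  obtain ⟨hD, hNe, hLen, hPair, ⟨c, hc⟩, hOdd⟩ := hQ
  have hgetD : ∀ j : Fin (k+1), Q.order.getD (2*(j:ℕ)) ∅ = Q.order[2*(j:ℕ)]'(by
      rw [hLen]; have := j.isLt; omega) := by
    intro j
    have hlt : 2*(j:ℕ) < Q.order.length := by rw [hLen]; have := j.isLt; omega
    rw [List.getD_eq_getElem?_getD, List.getElem?_eq_getElem hlt]
    rfl
  apply FF_surj_aux m k Q (fun j => Q.order.getD (2*(j:ℕ)) ∅) hLen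
  · intro j
    have hlt : 2*(j:ℕ) < Q.order.length := by rw [hLen]; have := j.isLt; omega
    rw [List.getElem?_eq_getElem hlt, hgetD j]
  · intro j
    exact hPair (j:ℕ) j.isLt
  · refine ⟨c, ?_⟩
    show Q.order.getD (2*((0 : Fin (k+1)):ℕ)) ∅ = {c}
    have h0 : 2*((0 : Fin (k+1)):ℕ) = 0 := by norm_num
    rw [h0]
    have hlt : 0 < Q.order.length := by rw [hLen]; omega
    rw [List.getD_eq_getElem?_getD, hc]
    rfl
  · show Odd (∑ j : Fin (k+1), ((Q.order.getD (2*(j:ℕ)) ∅).filter fun x => x < 0).card)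
    rw [Fin.sum_univ_eq_sum_range (fun i => ((Q.order.getD (2*i) ∅).filter fun x => x < 0).card) (k+1)]
    exact hOdd

theorem card_main (m k : ℕ) :
    Nat.card {Q : OrderedBPartition (m+1) // QCond m k Q}
      = (m+1) * 2^m * Nat.factorial k * Stir m k := by
  rw [← card_Dty m k]
  symm
  apply Nat.card_eq_of_bijective
    (fun d : Dty m k => (⟨FF m k d, FF_cond m k d⟩ : {Q : OrderedBPartition (m+1) // QCond m k Q}))
  constructor
  · intro d d' h
    exact FF_inj m k (congrArg Subtype.val h)
  · rintro ⟨Q, hQ⟩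
    obtain ⟨d, hd⟩ := FF_surj m k Q hQ
    exact ⟨d, Subtype.ext hd⟩


/-- The number of ordered `Dₙ`-partitions of the form `[C₁, −C₁, …, C_r, −C_r]` (no zero-block,
`r` pairs of nonzero blocks), with `C₁` a singleton, and an odd total number of negative
elements in `C₁ ∪ ⋯ ∪ C_r`, equals `n · 2^{n−1} · (r−1)! · S(n−1, r−1)`. -/
theorem count_unreachable_ordered_D_partitions (n r : ℕ) (hn : 2 ≤ n) (hr1 : 1 ≤ r)
    (hrn : r ≤ n) :
    Nat.card { Q : OrderedBPartition n //
      IsDPartition Q.P ∧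
      (∀ C ∈ Q.P.blocks, negSet C ≠ C) ∧
      Q.order.length = 2 * r ∧
      (∀ i < r, Q.order[2 * i + 1]? = some (negSet (Q.order.getD (2 * i) ∅))) ∧
      (∃ a : ℤ, Q.order[0]? = some ({a} : Finset ℤ)) ∧
      Odd (∑ i ∈ Finset.range r, ((Q.order.getD (2 * i) ∅).filter fun x => x < 0).card) } =
    n * 2 ^ (n - 1) * Nat.factorial (r - 1) * Stir (n - 1) (r - 1) := by
  obtain ⟨m, rfl⟩ : ∃ m, n = m + 1 := ⟨n - 1, by omega⟩
  obtain ⟨k, rfl⟩ : ∃ k, r = k + 1 := ⟨r - 1, by omega⟩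
  simp only [Nat.add_sub_cancel]
  exact (Nat.card_congr (Equiv.subtypeEquivRight
    (fun Q : OrderedBPartition (m+1) => Iff.rfl))).trans (card_main m k)
end

section
/- For every integer n ≥ 1 and every real number x, one has x^n = Σ_{k=0}^{n} S_D(n,k) · [x]_k^D + n · ((x−1)^{n−1} − ∏_{j=1}^{n−1} (x − (2j−1))), where [x]_0^D = 1, [x]_k^D = ∏_{j=1}^{k} (x − (2j−1)) for 1 ≤ k < n, and [x]_n^D = (x − (n−1)) · ∏_{j=1}^{n−1} (x − (2j−1)). -/
open Classical Finset

namespace FDaux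

noncomputable def ES (n : ℕ) : Finset ℤ := (Finset.Icc (-(n:ℤ)) n).erase 0

lemma mem_ES {n : ℕ} {x : ℤ} : x ∈ ES n ↔ x ≠ 0 ∧ |x| ≤ (n:ℤ) := by
  rw [ES, Finset.mem_erase, Finset.mem_Icc, abs_le]

lemma neg_mem_ES {n : ℕ} {x : ℤ} (h : x ∈ ES n) : -x ∈ ES n := by
  rw [mem_ES] at *; constructor
  · omega
  · simpa using h.2

lemma neg_mem_ES_iff {n : ℕ} {x : ℤ} : -x ∈ ES n ↔ x ∈ ES n :=
  ⟨fun h => by simpa using neg_mem_ES h, neg_mem_ES⟩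

lemma card_ES (n : ℕ) : (ES n).card = 2*n := by
  have h0 : (0:ℤ) ∈ Finset.Icc (-(n:ℤ)) n := by simp
  rw [ES, Finset.card_erase_of_mem h0, Int.card_Icc]
  omega

def Fv {n : ℕ} (f : Fin n → ℤ) (x : ℤ) : ℤ :=
  if h : 1 ≤ x ∧ x ≤ (n:ℤ) then f ⟨(x-1).toNat, by omega⟩
  else if h2 : 1 ≤ -x ∧ -x ≤ (n:ℤ) then -(f ⟨(-x-1).toNat, by omega⟩) else 0

lemma Fv_neg {n : ℕ} (f : Fin n → ℤ) (x : ℤ) : Fv f (-x) = - Fv f x := by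
  simp only [Fv, neg_neg]
  split_ifs with h1 h2 h3 <;> first | rfl | omega | ring | simp

lemma Fv_coe {n : ℕ} (f : Fin n → ℤ) (i : Fin n) : Fv f ((i:ℤ)+1) = f i := by
  have hi : (i:ℤ) < n := by exact_mod_cast i.isLt
  rw [Fv, dif_pos ⟨by omega, by omega⟩]
  congr 1
  apply Fin.ext
  simp

lemma Fv_pos_eq {n : ℕ} (f : Fin n → ℤ) {x : ℤ} (h1 : 1 ≤ x) (h2 : x ≤ (n:ℤ)) :
    Fv f x = f ⟨(x-1).toNat, by omega⟩ := dif_pos ⟨h1, h2⟩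

lemma Fv_bound {n : ℕ} {f : Fin n → ℤ} {m : ℕ} (hf : ∀ i, |f i| ≤ (m:ℤ)) (x : ℤ) :
    |Fv f x| ≤ (m:ℤ) := by
  rw [Fv]
  split_ifs <;> simp [abs_neg, hf]

lemma Fv_eq_zero_exists {n : ℕ} {f : Fin n → ℤ} {x : ℤ} (hx : x ∈ ES n) (h : Fv f x = 0) :
    ∃ i, f i = 0 := by
  rw [mem_ES] at hx
  rw [Fv] at h
  split_ifs at h with h1 h2
  · exact ⟨_, h⟩
  · exact ⟨_, by linarith⟩
  · have := abs_le.mp hx.2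
    omega

noncomputable def blk {n : ℕ} (f : Fin n → ℤ) (c : ℤ) : Finset ℤ := (ES n).filter (fun x => Fv f x = c)

lemma mem_blk {n : ℕ} {f : Fin n → ℤ} {c x : ℤ} : x ∈ blk f c ↔ x ∈ ES n ∧ Fv f x = c :=
  Finset.mem_filter

lemma mem_negSet {C : Finset ℤ} {x : ℤ} : x ∈ negSet C ↔ -x ∈ C := by
  simp only [negSet, Finset.mem_image]
  constructor
  · rintro ⟨a, ha, rfl⟩; simpa using ha
  · intro h; exact ⟨-x, h, by ring⟩

lemma negSet_negSet (C : Finset ℤ) : negSet (negSet C) = C := by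
  ext x; rw [mem_negSet, mem_negSet, neg_neg]

lemma negSet_blk {n : ℕ} (f : Fin n → ℤ) (c : ℤ) : negSet (blk (n := n) f c) = blk f (-c) := by
  ext y
  rw [mem_negSet, mem_blk, mem_blk, Fv_neg, neg_mem_ES_iff]
  constructor <;> rintro ⟨h1, h2⟩ <;> exact ⟨h1, by omega⟩

lemma blk_val_eq {n : ℕ} {f : Fin n → ℤ} {c c' x : ℤ} (h : x ∈ blk f c) (h' : x ∈ blk f c') :
    c = c' := by
  rw [mem_blk] at h h'; omega

lemma blk_nonempty_of_mem {n : ℕ} {f : Fin n → ℤ} {c : ℤ}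
    (hc : c ∈ (ES n).image (Fv f)) : ∃ x, x ∈ blk f c := by
  obtain ⟨x, hx, hfx⟩ := Finset.mem_image.1 hc
  exact ⟨x, mem_blk.2 ⟨hx, hfx⟩⟩

noncomputable def Phi {n : ℕ} (f : Fin n → ℤ) : BPartition n where
  blocks := ((ES n).image (Fv f)).image (blk f)
  cover := by
    intro x
    rw [show (x ≠ 0 ∧ |x| ≤ (n:ℤ)) ↔ x ∈ ES n from mem_ES.symm]
    constructor
    · intro hx
      exact ⟨blk f (Fv f x), Finset.mem_image_of_mem _ (Finset.mem_image_of_mem _ hx),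
        mem_blk.2 ⟨hx, rfl⟩⟩
    · rintro ⟨C, hC, hxC⟩
      obtain ⟨c, hc, rfl⟩ := Finset.mem_image.1 hC
      exact (mem_blk.1 hxC).1
  nonempty := by
    rintro C hC
    obtain ⟨c, hc, rfl⟩ := Finset.mem_image.1 hC
    obtain ⟨x, hx⟩ := blk_nonempty_of_mem hc
    exact ⟨x, hx⟩
  disj := by
    rintro C hC C' hC' hne
    obtain ⟨c, hc, rfl⟩ := Finset.mem_image.1 hC
    obtain ⟨c', hc', rfl⟩ := Finset.mem_image.1 hC'
    refine Finset.disjoint_left.2 fun x hx hx' => hne ?_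
    rw [blk_val_eq hx hx']
  closed := by
    rintro C hC
    obtain ⟨c, hc, rfl⟩ := Finset.mem_image.1 hC
    rw [negSet_blk]
    obtain ⟨x, hx, rfl⟩ := Finset.mem_image.1 hc
    rw [show -Fv f x = Fv f (-x) from (Fv_neg f x).symm]
    exact Finset.mem_image_of_mem _ (Finset.mem_image_of_mem _ (neg_mem_ES hx))
  zeroUnique := by
    have key : ∀ c ∈ (ES n).image (Fv f), negSet (blk f c) = blk f c → c = 0 := by
      intro c hc h
      rw [negSet_blk] at h
      obtain ⟨x, hx⟩ := blk_nonempty_of_mem hc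
      have hx' : x ∈ blk f (-c) := h ▸ hx
      have := blk_val_eq hx' hx
      omega
    rintro C hC C' hC' h h'
    obtain ⟨c, hc, rfl⟩ := Finset.mem_image.1 hC
    obtain ⟨c', hc', rfl⟩ := Finset.mem_image.1 hC'
    rw [key c hc h, key c' hc' h']

lemma mem_blocks_Phi {n : ℕ} {f : Fin n → ℤ} {C : Finset ℤ} :
    C ∈ (Phi f).blocks ↔ ∃ c ∈ (ES n).image (Fv f), C = blk f c := by
  constructor
  · intro hC
    obtain ⟨c, hc, rfl⟩ := Finset.mem_image.1 hC
    exact ⟨c, hc, rfl⟩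
  · rintro ⟨c, hc, rfl⟩
    exact Finset.mem_image_of_mem _ hc

def zc {n : ℕ} (f : Fin n → ℤ) : ℕ := (Finset.univ.filter (fun i => f i = 0)).card

lemma blk0_filter_eq {n : ℕ} (f : Fin n → ℤ) :
    ((blk f 0).filter (fun x => 0 < x)) =
      (Finset.univ.filter (fun i => f i = 0)).image (fun i : Fin n => (i:ℤ)+1) := by
  ext x
  simp only [Finset.mem_filter, Finset.mem_image, Finset.mem_univ, true_and, mem_blk]
  constructor
  · rintro ⟨⟨hxE, hfx⟩, hpos⟩
    have h2 := abs_le.1 (mem_ES.1 hxE).2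
    refine ⟨⟨(x-1).toNat, by omega⟩, ?_, by push_cast; omega⟩
    rw [← Fv_pos_eq f (by omega) (by omega)]
    exact hfx
  · rintro ⟨i, hfi, rfl⟩
    have hlt : (i:ℤ) < n := by exact_mod_cast i.isLt
    refine ⟨⟨mem_ES.2 ⟨by omega, ?_⟩, by rw [Fv_coe]; exact hfi⟩, by omega⟩
    rw [abs_of_nonneg (by omega)]
    omega

lemma card_pos_blk0 {n : ℕ} (f : Fin n → ℤ) :
    ((blk f 0).filter (fun x => 0 < x)).card = zc f := by
  rw [blk0_filter_eq, Finset.card_image_of_injective _ ?_, zc]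
  intro a b h
  have h' : (a:ℤ)+1 = (b:ℤ)+1 := h
  apply Fin.ext
  have : (a:ℤ) = (b:ℤ) := by omega
  exact_mod_cast this

lemma zero_blk_of_neg_eq {n : ℕ} {f : Fin n → ℤ} {C : Finset ℤ}
    (hC : C ∈ (Phi f).blocks) (h : negSet C = C) : C = blk f 0 := by
  obtain ⟨c, hc, rfl⟩ := mem_blocks_Phi.1 hC
  rw [negSet_blk] at h
  obtain ⟨x, hx⟩ := blk_nonempty_of_mem hc
  have hx' : x ∈ blk f (-c) := h ▸ hx
  have := blk_val_eq hx' hx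
  have hc0 : c = 0 := by omega
  rw [hc0]

lemma isD_Phi_iff {n : ℕ} (f : Fin n → ℤ) : IsDPartition (Phi f) ↔ zc f ≠ 1 := by
  constructor
  · intro hD h1
    obtain ⟨i, hi⟩ : ∃ i, f i = 0 := by
      have : (Finset.univ.filter (fun i => f i = 0)).Nonempty := by
        rw [← Finset.card_pos]
        change 0 < zc f
        omega
      obtain ⟨i, hi⟩ := this
      exact ⟨i, (Finset.mem_filter.1 hi).2⟩
    have hlt : (i:ℤ) < n := by exact_mod_cast i.isLt
    have hmem : ((i:ℤ)+1) ∈ ES n := mem_ES.2 ⟨by omega, by rw [abs_of_nonneg (by omega)]; omega⟩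
    have h0 : (0:ℤ) ∈ (ES n).image (Fv f) :=
      Finset.mem_image.2 ⟨(i:ℤ)+1, hmem, by rw [Fv_coe]; exact hi⟩
    have hb : blk f 0 ∈ (Phi f).blocks := mem_blocks_Phi.2 ⟨0, h0, rfl⟩
    have := hD (blk f 0) hb (by rw [negSet_blk]; norm_num)
    rw [card_pos_blk0] at this
    omega
  · intro hzc C hC hneg
    have hCeq := zero_blk_of_neg_eq hC hneg
    subst hCeq
    rw [card_pos_blk0]
    obtain ⟨x, hx⟩ := (Phi f).nonempty _ hC
    rw [mem_blk] at hx
    obtain ⟨i, hi⟩ := Fv_eq_zero_exists hx.1 hx.2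
    have h1 : 1 ≤ zc f :=
      Finset.card_pos.2 ⟨i, Finset.mem_filter.2 ⟨Finset.mem_univ i, hi⟩⟩
    omega

lemma block_subset_ES {n : ℕ} {P : BPartition n} {C : Finset ℤ} (hC : C ∈ P.blocks) :
    C ⊆ ES n := fun x hx => mem_ES.2 ((P.cover x).2 ⟨C, hC, hx⟩)

lemma block_nonempty {n : ℕ} {P : BPartition n} {C : Finset ℤ} (hC : C ∈ P.blocks) :
    C.Nonempty := P.nonempty C hC

lemma blocks_eq_of_mem {n : ℕ} {P : BPartition n} {C C' : Finset ℤ} (hC : C ∈ P.blocks)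
    (hC' : C' ∈ P.blocks) {x : ℤ} (hx : x ∈ C) (hx' : x ∈ C') : C = C' := by
  by_contra hne
  exact Finset.disjoint_left.1 (P.disj C hC C' hC' hne) hx hx'

lemma exists_unique_block {n : ℕ} (P : BPartition n) {x : ℤ} (hx : x ∈ ES n) :
    ∃! C, C ∈ P.blocks ∧ x ∈ C := by
  obtain ⟨C, hC, hxC⟩ := (P.cover x).1 (mem_ES.1 hx)
  exact ⟨C, ⟨hC, hxC⟩, fun C' ⟨hC', hxC'⟩ => blocks_eq_of_mem hC' hC hxC' hxC⟩

noncomputable def blockOf {n : ℕ} (P : BPartition n) (x : ℤ) : Finset ℤ :=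
  if hx : x ∈ ES n then P.blocks.choose (x ∈ ·) (by
    obtain ⟨C, hC, hu⟩ := exists_unique_block P hx
    exact ⟨C, hC, fun C' hC' => hu C' hC'⟩) else ∅

lemma blockOf_mem {n : ℕ} (P : BPartition n) {x : ℤ} (hx : x ∈ ES n) :
    blockOf P x ∈ P.blocks := by
  rw [blockOf, dif_pos hx]; exact Finset.choose_mem (fun C => x ∈ C) P.blocks _

lemma mem_blockOf {n : ℕ} (P : BPartition n) {x : ℤ} (hx : x ∈ ES n) :
    x ∈ blockOf P x := by
  rw [blockOf, dif_pos hx]; exact Finset.choose_property (fun C => x ∈ C) P.blocks _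

lemma blockOf_eq {n : ℕ} (P : BPartition n) {x : ℤ} (hx : x ∈ ES n) {C : Finset ℤ}
    (hC : C ∈ P.blocks) (hxC : x ∈ C) : blockOf P x = C :=
  blocks_eq_of_mem (blockOf_mem P hx) hC (mem_blockOf P hx) hxC

lemma negSet_mem_blocks {n : ℕ} {P : BPartition n} {C : Finset ℤ} (hC : C ∈ P.blocks) :
    negSet C ∈ P.blocks := P.closed C hC

lemma blockOf_neg {n : ℕ} (P : BPartition n) {x : ℤ} (hx : x ∈ ES n) :
    blockOf P (-x) = negSet (blockOf P x) := by
  apply blockOf_eq P (neg_mem_ES hx) (negSet_mem_blocks (blockOf_mem P hx))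
  rw [mem_negSet, neg_neg]
  exact mem_blockOf P hx

def posKey (C : Finset ℤ) : ℤ := WithTop.untopD 0 C.min

lemma posKey_mem {C : Finset ℤ} (h : C.Nonempty) : posKey C ∈ C := by
  rw [posKey, ← Finset.coe_min' h, WithTop.untopD_coe]
  exact Finset.min'_mem C h

def PosB {n : ℕ} (P : BPartition n) : Finset (Finset ℤ) :=
  P.blocks.filter (fun C => negSet C ≠ C ∧ posKey C < posKey (negSet C))

def NZB {n : ℕ} (P : BPartition n) : Finset (Finset ℤ) :=
  P.blocks.filter (fun C => negSet C ≠ C)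

lemma posKey_ne {n : ℕ} {P : BPartition n} {C C' : Finset ℤ} (hC : C ∈ P.blocks)
    (hC' : C' ∈ P.blocks) (hne : C ≠ C') : posKey C ≠ posKey C' := by
  intro h
  have h1 := posKey_mem (block_nonempty hC)
  have h2 := posKey_mem (block_nonempty hC')
  rw [h] at h1
  exact hne (blocks_eq_of_mem hC hC' h1 h2)

lemma PosB_subset {n : ℕ} (P : BPartition n) : PosB P ⊆ P.blocks := Finset.filter_subset _ _

lemma not_both_PosB {n : ℕ} {P : BPartition n} {C : Finset ℤ} (h : C ∈ PosB P) :
    negSet C ∉ PosB P := by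
  intro h'
  have h1 := (Finset.mem_filter.1 h).2.2
  have h2 := (Finset.mem_filter.1 h').2.2
  rw [negSet_negSet] at h2
  exact absurd h2 (not_lt.2 (le_of_lt h1))

lemma PosB_or {n : ℕ} {P : BPartition n} {C : Finset ℤ} (hC : C ∈ P.blocks)
    (hne : negSet C ≠ C) : C ∈ PosB P ∨ negSet C ∈ PosB P := by
  have hnC := negSet_mem_blocks hC
  have hkey := posKey_ne hC hnC (Ne.symm hne)
  rcases lt_or_gt_of_ne hkey with h | h
  · exact Or.inl (Finset.mem_filter.2 ⟨hC, hne, h⟩)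
  · right
    refine Finset.mem_filter.2 ⟨hnC, ?_, ?_⟩
    · rw [negSet_negSet]; exact fun h' => hne h'.symm
    · rw [negSet_negSet]; exact h

lemma card_NZB {n : ℕ} (P : BPartition n) : (NZB P).card = 2 * (PosB P).card := by
  classical
  have hsplit : NZB P = PosB P ∪ ((NZB P).filter (fun C => posKey (negSet C) < posKey C)) := by
    ext C
    simp only [NZB, PosB, Finset.mem_union, Finset.mem_filter]
    constructor
    · rintro ⟨hC, hne⟩
      have := posKey_ne hC (negSet_mem_blocks hC) (Ne.symm hne)
      rcases lt_or_gt_of_ne this with h | h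
      · exact Or.inl ⟨hC, hne, h⟩
      · exact Or.inr ⟨⟨hC, hne⟩, h⟩
    · rintro (⟨hC, hne, _⟩ | ⟨⟨hC, hne⟩, _⟩) <;> exact ⟨hC, hne⟩
  have hdisj : Disjoint (PosB P) ((NZB P).filter (fun C => posKey (negSet C) < posKey C)) := by
    refine Finset.disjoint_left.2 fun C h1 h2 => ?_
    have := (Finset.mem_filter.1 h1).2.2
    have h2' := (Finset.mem_filter.1 h2).2
    exact absurd h2' (not_lt.2 (le_of_lt this))
  have hcard : ((NZB P).filter (fun C => posKey (negSet C) < posKey C)).card = (PosB P).card := by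
    apply Finset.card_nbij' (fun C => negSet C) (fun C => negSet C)
    · intro C hC
      obtain ⟨⟨hCb, hne⟩, hlt⟩ := Finset.mem_filter.1 hC |>.imp (Finset.mem_filter.1) id
      refine Finset.mem_filter.2 ⟨negSet_mem_blocks hCb, ?_, ?_⟩
      · rw [negSet_negSet]; exact fun h => hne h.symm
      · rw [negSet_negSet]; exact hlt
    · intro C hC
      obtain ⟨hCb, hne, hlt⟩ := Finset.mem_filter.1 hC
      refine Finset.mem_filter.2 ⟨Finset.mem_filter.2 ⟨negSet_mem_blocks hCb, ?_⟩, ?_⟩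
      · rw [negSet_negSet]; exact fun h => hne h.symm
      · rw [negSet_negSet]; exact hlt
    · intro C _; exact negSet_negSet C
    · intro C _; exact negSet_negSet C
  rw [hsplit, Finset.card_union_of_disjoint hdisj, hcard]
  ring

lemma BPartition.ext' {n : ℕ} {P Q : BPartition n} (h : P.blocks = Q.blocks) : P = Q := by
  cases P; cases Q; simp_all

instance instFiniteBP (n : ℕ) : Finite (BPartition n) := by
  apply Finite.of_injective (fun P : BPartition n =>
    (⟨P.blocks, by
      rw [Finset.mem_powerset]
      intro C hC
      rw [Finset.mem_powerset]
      exact block_subset_ES hC⟩ : ((ES n).powerset.powerset : Finset (Finset (Finset ℤ)))))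
  intro P Q h
  exact BPartition.ext' (congrArg Subtype.val h)

noncomputable instance instFintypeBP (n : ℕ) : Fintype (BPartition n) := Fintype.ofFinite _

lemma blocks_biUnion {n : ℕ} (P : BPartition n) : P.blocks.biUnion id = ES n := by
  ext x
  simp only [Finset.mem_biUnion, id]
  rw [mem_ES]
  exact (P.cover x).symm

lemma sum_card_blocks {n : ℕ} (P : BPartition n) : ∑ C ∈ P.blocks, C.card = 2 * n := by
  rw [← card_ES n, ← blocks_biUnion P]
  exact (Finset.card_biUnion (fun C hC C' hC' hne => P.disj C hC C' hC' hne)).symm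

lemma card_blocks_le {n : ℕ} (P : BPartition n) : P.blocks.card ≤ 2 * n := by
  calc P.blocks.card = ∑ _C ∈ P.blocks, 1 := by rw [Finset.sum_const, smul_eq_mul, mul_one]
  _ ≤ ∑ C ∈ P.blocks, C.card := Finset.sum_le_sum (fun C hC => Finset.card_pos.2 (block_nonempty hC))
  _ = 2 * n := sum_card_blocks P

lemma PosB_card_le {n : ℕ} (P : BPartition n) : (PosB P).card ≤ n := by
  have h1 : (NZB P).card ≤ P.blocks.card := Finset.card_le_card (Finset.filter_subset _ _)
  have h2 := card_NZB P
  have h3 := card_blocks_le P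
  omega

lemma hasPairs_iff {n : ℕ} (P : BPartition n) (k : ℕ) : hasPairs P k ↔ (PosB P).card = k := by
  rw [hasPairs, show P.blocks.filter (fun C => negSet C ≠ C) = NZB P from rfl, card_NZB]
  omega

noncomputable def tF (n m : ℕ) : Finset (Fin n → ℤ) := Fintype.piFinset (fun _ => Finset.Icc (-(m:ℤ)) m)

lemma mem_tF {n m : ℕ} {f : Fin n → ℤ} : f ∈ tF n m ↔ ∀ i, |f i| ≤ (m:ℤ) := by
  simp [tF, Fintype.mem_piFinset, Finset.mem_Icc, abs_le]

noncomputable def valOf {n : ℕ} (P : BPartition n) (e : ↥(PosB P) → ℤ) (C : Finset ℤ) : ℤ :=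
  (if h : C ∈ PosB P then e ⟨C, h⟩ else 0) -
    (if h : negSet C ∈ PosB P then e ⟨negSet C, h⟩ else 0)

section ValOf

variable {n m : ℕ} {P : BPartition n} (e : ↥(PosB P) → ℤ)

lemma valOf_negSet (C : Finset ℤ) : valOf P e (negSet C) = - valOf P e C := by
  rw [valOf, valOf, negSet_negSet]; ring

lemma valOf_PosB {C : Finset ℤ} (h : C ∈ PosB P) : valOf P e C = e ⟨C, h⟩ := by
  rw [valOf, dif_pos h, dif_neg (not_both_PosB h)]; ring

lemma valOf_negPosB {C : Finset ℤ} (h : negSet C ∈ PosB P) :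
    valOf P e C = - e ⟨negSet C, h⟩ := by
  have hC : C ∉ PosB P := by
    intro hC; exact not_both_PosB hC h
  rw [valOf, dif_pos h, dif_neg hC]; ring

lemma valOf_zero {C : Finset ℤ} (h : C ∉ PosB P) (h' : negSet C ∉ PosB P) :
    valOf P e C = 0 := by
  rw [valOf, dif_neg h, dif_neg h']; ring

variable (he : ∀ X, 1 ≤ |e X| ∧ |e X| ≤ (m:ℤ)) (hinj : Function.Injective (fun X => |e X|))

include he in
lemma valOf_bound (C : Finset ℤ) : |valOf P e C| ≤ (m:ℤ) := by
  by_cases h : C ∈ PosB P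
  · rw [valOf_PosB e h]; exact (he _).2
  · by_cases h' : negSet C ∈ PosB P
    · rw [valOf_negPosB e h', abs_neg]; exact (he _).2
    · rw [valOf_zero e h h']
      simp

include he hinj in
lemma valOf_inj {C C' : Finset ℤ} (hC : C ∈ P.blocks) (hC' : C' ∈ P.blocks)
    (h : valOf P e C = valOf P e C') : C = C' := by
  have habs : ∀ (X Y : ↥(PosB P)), |e X| = |e Y| → X.1 = Y.1 := by
    intro X Y hXY
    exact congrArg Subtype.val (hinj hXY)
  have hne : ∀ (X : ↥(PosB P)), e X ≠ 0 := by
    intro X h0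
    have := (he X).1
    rw [h0] at this
    simp at this
  by_cases h1 : C ∈ PosB P
  · by_cases h2 : C' ∈ PosB P
    · rw [valOf_PosB e h1, valOf_PosB e h2] at h
      exact habs ⟨C, h1⟩ ⟨C', h2⟩ (by rw [h])
    · by_cases h3 : negSet C' ∈ PosB P
      · rw [valOf_PosB e h1, valOf_negPosB e h3] at h
        have hCC : C = negSet C' := habs ⟨C, h1⟩ ⟨negSet C', h3⟩ (by rw [h, abs_neg])
        have : (⟨C, h1⟩ : ↥(PosB P)) = ⟨negSet C', h3⟩ := Subtype.ext hCC
        rw [this] at h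
        exact absurd (by omega : e ⟨negSet C', h3⟩ = 0) (hne _)
      · rw [valOf_PosB e h1, valOf_zero e h2 h3] at h
        exact absurd h (hne _)
  · by_cases h1' : negSet C ∈ PosB P
    · by_cases h2 : C' ∈ PosB P
      · rw [valOf_negPosB e h1', valOf_PosB e h2] at h
        have hCC : negSet C = C' := habs ⟨negSet C, h1'⟩ ⟨C', h2⟩ (by rw [← h, abs_neg])
        have : (⟨negSet C, h1'⟩ : ↥(PosB P)) = ⟨C', h2⟩ := Subtype.ext hCC
        rw [this] at h
        exact absurd (by omega : e ⟨C', h2⟩ = 0) (hne _)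
      · by_cases h3 : negSet C' ∈ PosB P
        · rw [valOf_negPosB e h1', valOf_negPosB e h3] at h
          have hCC : negSet C = negSet C' :=
            habs ⟨negSet C, h1'⟩ ⟨negSet C', h3⟩ (by rw [show e ⟨negSet C, h1'⟩ = e ⟨negSet C', h3⟩ by omega])
          rw [← negSet_negSet C, hCC, negSet_negSet]
        · rw [valOf_negPosB e h1', valOf_zero e h2 h3] at h
          exact absurd (by omega : e ⟨negSet C, h1'⟩ = 0) (hne _)
    · have hCz : negSet C = C := by
        by_contra hcc
        rcases PosB_or hC hcc with h' | h' <;> [exact h1 h'; exact h1' h']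
      by_cases h2 : C' ∈ PosB P
      · rw [valOf_zero e h1 h1', valOf_PosB e h2] at h
        exact absurd h.symm (hne _)
      · by_cases h3 : negSet C' ∈ PosB P
        · rw [valOf_zero e h1 h1', valOf_negPosB e h3] at h
          exact absurd (by omega : e ⟨negSet C', h3⟩ = 0) (hne _)
        · have hCz' : negSet C' = C' := by
            by_contra hcc
            rcases PosB_or hC' hcc with h' | h' <;> [exact h2 h'; exact h3 h']
          exact P.zeroUnique C hC C' hC' hCz hCz'

end ValOf

section Fiber

variable {n m : ℕ}

lemma coe_succ_mem_ES (n : ℕ) (i : Fin n) : ((i:ℤ)+1) ∈ ES n := by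
  have hlt : (i:ℤ) < n := by exact_mod_cast i.isLt
  exact mem_ES.2 ⟨by omega, by rw [abs_of_nonneg (by omega)]; omega⟩

noncomputable def fInv (P : BPartition n) (e : ↥(PosB P) → ℤ) : Fin n → ℤ :=
  fun i => valOf P e (blockOf P ((i:ℤ)+1))

lemma Fv_fInv (P : BPartition n) (e : ↥(PosB P) → ℤ) {x : ℤ} (hx : x ∈ ES n) :
    Fv (fInv P e) x = valOf P e (blockOf P x) := by
  obtain ⟨hx0, hxb⟩ := mem_ES.1 hx
  have hxb' := abs_le.1 hxb
  have key : ∀ y : ℤ, 1 ≤ y → y ≤ (n:ℤ) → Fv (fInv P e) y = valOf P e (blockOf P y) := by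
    intro y hy1 hy2
    rw [Fv_pos_eq _ hy1 hy2, fInv]
    have hxx : (((y - 1).toNat : ℤ)) + 1 = y := by omega
    simp only [hxx]
  by_cases hpos : 1 ≤ x
  · exact key x hpos hxb'.2
  · have hnx : -x ∈ ES n := neg_mem_ES hx
    have h := Fv_neg (fInv P e) (-x)
    rw [neg_neg] at h
    rw [h, key (-x) (by omega) (by omega), blockOf_neg P hx, valOf_negSet]
    ring
lemma fInv_mem_tF (P : BPartition n) (e : ↥(PosB P) → ℤ)
    (he : ∀ X, 1 ≤ |e X| ∧ |e X| ≤ (m:ℤ)) : fInv P e ∈ tF n m := by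
  rw [mem_tF]
  intro i
  exact valOf_bound e he _

lemma Phi_fInv (P : BPartition n) (e : ↥(PosB P) → ℤ)
    (he : ∀ X, 1 ≤ |e X| ∧ |e X| ≤ (m:ℤ)) (hinj : Function.Injective (fun X => |e X|)) :
    Phi (fInv P e) = P := by
  set f := fInv P e with hf
  apply BPartition.ext'
  have key : ∀ x ∈ ES n, blk f (Fv f x) = blockOf P x := by
    intro x hx
    ext y
    rw [mem_blk]
    constructor
    · rintro ⟨hy, hvy⟩
      rw [Fv_fInv P e hy, Fv_fInv P e hx] at hvy
      have hbb := valOf_inj e he hinj (blockOf_mem P hy) (blockOf_mem P hx) hvy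
      rw [← hbb]
      exact mem_blockOf P hy
    · intro hy
      have hyE : y ∈ ES n := block_subset_ES (blockOf_mem P hx) hy
      have hbb : blockOf P y = blockOf P x := blockOf_eq P hyE (blockOf_mem P hx) hy
      refine ⟨hyE, ?_⟩
      rw [Fv_fInv P e hyE, Fv_fInv P e hx, hbb]
  show ((ES n).image (Fv f)).image (blk f) = P.blocks
  rw [Finset.image_image]
  ext C
  rw [Finset.mem_image]
  constructor
  · rintro ⟨x, hx, rfl⟩
    rw [Function.comp_apply, key x hx]
    exact blockOf_mem P hx
  · intro hC
    have hne := block_nonempty hC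
    have hpk : posKey C ∈ C := posKey_mem hne
    have hpkE : posKey C ∈ ES n := block_subset_ES hC hpk
    refine ⟨posKey C, hpkE, ?_⟩
    rw [Function.comp_apply, key _ hpkE]
    exact blockOf_eq P hpkE hC hpk

variable (P : BPartition n)

lemma blockOf_eq_blk {f : Fin n → ℤ} (hphi : Phi f = P) {x : ℤ} (hx : x ∈ ES n) :
    blockOf P x = blk f (Fv f x) := by
  apply blockOf_eq P hx
  · rw [← hphi]
    exact mem_blocks_Phi.2 ⟨Fv f x, Finset.mem_image_of_mem _ hx, rfl⟩
  · exact mem_blk.2 ⟨hx, rfl⟩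

lemma blk_posKey {f : Fin n → ℤ} (hphi : Phi f = P) {C : Finset ℤ} (hC : C ∈ P.blocks) :
    blk f (Fv f (posKey C)) = C := by
  have hne := block_nonempty hC
  have hpk : posKey C ∈ C := posKey_mem hne
  have hpkE : posKey C ∈ ES n := block_subset_ES hC hpk
  rw [← blockOf_eq_blk P hphi hpkE]
  exact blockOf_eq P hpkE hC hpk

lemma uval_ne_zero {f : Fin n → ℤ} (hphi : Phi f = P) {C : Finset ℤ} (hC : C ∈ PosB P) :
    Fv f (posKey C) ≠ 0 := by
  intro h0
  have hCb : C ∈ P.blocks := PosB_subset P hC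
  have hblk : blk f 0 = C := by
    rw [← h0]
    exact blk_posKey P hphi hCb
  have h1 : negSet C = C := by
    rw [← hblk, negSet_blk, neg_zero]
  exact (Finset.mem_filter.1 hC).2.1 h1

end Fiber

section FibEquiv

variable {n m : ℕ}

noncomputable def fibEquiv (P : BPartition n) (m : ℕ) :
    {f : Fin n → ℤ // f ∈ tF n m ∧ Phi f = P} ≃
      {e : ↥(PosB P) → ℤ //
        (∀ X, 1 ≤ |e X| ∧ |e X| ≤ (m:ℤ)) ∧ Function.Injective (fun X => |e X|)} where
  toFun := fun F => ⟨fun X => Fv F.1 (posKey X.1), by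
    obtain ⟨f, hft, hphi⟩ := F
    constructor
    · intro X
      refine ⟨Int.one_le_abs (uval_ne_zero P hphi X.2), Fv_bound (mem_tF.1 hft) _⟩
    · intro X Y hXY
      have hXY' : |Fv f (posKey X.1)| = |Fv f (posKey Y.1)| := hXY
      have hXb : X.1 ∈ P.blocks := PosB_subset P X.2
      have hYb : Y.1 ∈ P.blocks := PosB_subset P Y.2
      have hX : blk f (Fv f (posKey X.1)) = X.1 := blk_posKey P hphi hXb
      have hY : blk f (Fv f (posKey Y.1)) = Y.1 := blk_posKey P hphi hYb
      rcases abs_eq_abs.1 hXY' with h | h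
      · exact Subtype.ext (by rw [← hX, ← hY, h])
      · exfalso
        have : X.1 = negSet Y.1 := by
          rw [← hX, ← hY, h, ← negSet_blk]
        exact not_both_PosB Y.2 (this ▸ X.2)⟩
  invFun := fun E => ⟨fInv P E.1, fInv_mem_tF P E.1 E.2.1, Phi_fInv P E.1 E.2.1 E.2.2⟩
  left_inv := by
    rintro ⟨f, hft, hphi⟩
    apply Subtype.ext
    funext i
    show valOf P _ (blockOf P ((i:ℤ)+1)) = f i
    have hxE : ((i:ℤ)+1) ∈ ES n := coe_succ_mem_ES n i
    rw [blockOf_eq_blk P hphi hxE, ← Fv_coe f i]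
    set c := Fv f ((i:ℤ)+1) with hc
    by_cases hc0 : c = 0
    · have hneg : negSet (blk f c) = blk f c := by
        rw [hc0, negSet_blk, neg_zero]
      have h1 : blk f c ∉ PosB P := fun h => (Finset.mem_filter.1 h).2.1 hneg
      have h2 : negSet (blk f c) ∉ PosB P := by
        rw [hneg]; exact h1
      rw [valOf_zero _ h1 h2, hc0]
    · have hCb : blk f c ∈ P.blocks := by
        rw [← hphi]
        exact mem_blocks_Phi.2 ⟨c, Finset.mem_image.2 ⟨(i:ℤ)+1, hxE, hc.symm⟩, rfl⟩
      have hne : negSet (blk f c) ≠ blk f c := by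
        intro h
        rw [negSet_blk] at h
        have hx1 : ((i:ℤ)+1) ∈ blk f c := mem_blk.2 ⟨hxE, hc.symm⟩
        have hx2 : ((i:ℤ)+1) ∈ blk f (-c) := h.symm ▸ hx1
        have := blk_val_eq hx2 hx1
        omega
      rcases PosB_or hCb hne with h | h
      · rw [valOf_PosB _ h]
        have hpk : posKey (blk f c) ∈ blk f c := posKey_mem (block_nonempty hCb)
        exact (mem_blk.1 hpk).2
      · rw [valOf_negPosB _ h]
        have hpk : posKey (negSet (blk f c)) ∈ blk f (-c) := by
          rw [← negSet_blk]
          exact posKey_mem (block_nonempty (negSet_mem_blocks hCb))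
        show -(Fv f (posKey (negSet (blk f c)))) = c
        rw [show Fv f (posKey (negSet (blk f c))) = -c from (mem_blk.1 hpk).2]
        ring
  right_inv := by
    rintro ⟨e, he, hinj⟩
    apply Subtype.ext
    funext X
    show Fv (fInv P e) (posKey X.1) = e X
    have hXb : X.1 ∈ P.blocks := PosB_subset P X.2
    have hpk : posKey X.1 ∈ X.1 := posKey_mem (block_nonempty hXb)
    have hpkE : posKey X.1 ∈ ES n := block_subset_ES hXb hpk
    rw [Fv_fInv P e hpkE, blockOf_eq P hpkE hXb hpk, valOf_PosB e X.2]

noncomputable def signEquiv (P : BPartition n) (m : ℕ) :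
    {e : ↥(PosB P) → ℤ //
        (∀ X, 1 ≤ |e X| ∧ |e X| ≤ (m:ℤ)) ∧ Function.Injective (fun X => |e X|)} ≃
      {u : ↥(PosB P) → ↥(Finset.Icc (1:ℤ) (m:ℤ)) // Function.Injective u} ×
        (↥(PosB P) → Bool) where
  toFun := fun E => (⟨fun X => ⟨|E.1 X|, Finset.mem_Icc.2 ⟨(E.2.1 X).1, (E.2.1 X).2⟩⟩,
      fun X Y h => E.2.2 (congrArg Subtype.val h)⟩, fun X => decide (0 < E.1 X))
  invFun := fun US => ⟨fun X => if US.2 X then ((US.1.1 X : ℤ)) else -(US.1.1 X : ℤ), by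
    have hb : ∀ X, 1 ≤ (US.1.1 X : ℤ) ∧ (US.1.1 X : ℤ) ≤ (m:ℤ) := by
      intro X
      exact Finset.mem_Icc.1 (US.1.1 X).2
    have habs : ∀ X, |if US.2 X then ((US.1.1 X : ℤ)) else -(US.1.1 X : ℤ)| = (US.1.1 X : ℤ) := by
      intro X
      have := (hb X).1
      split_ifs <;> [rw [abs_of_pos (by omega)]; rw [abs_neg, abs_of_pos (by omega)]]
    constructor
    · intro X
      rw [habs X]
      exact hb X
    · intro X Y h
      simp only [habs] at h
      have : US.1.1 X = US.1.1 Y := Subtype.ext h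
      exact US.1.2 this⟩
  left_inv := by
    rintro ⟨e, he, hinj⟩
    apply Subtype.ext
    funext X
    show (if decide (0 < e X) then |e X| else -|e X|) = e X
    have h1 := (he X).1
    rcases lt_trichotomy (e X) 0 with h | h | h
    · rw [if_neg (by simpa using not_lt.2 (le_of_lt h)), abs_of_neg h]
      ring
    · exfalso; rw [h] at h1; simp at h1
    · rw [if_pos (by simpa using h), abs_of_pos h]
  right_inv := by
    rintro ⟨⟨u, hu⟩, s⟩
    have hb : ∀ X, 1 ≤ (u X : ℤ) := fun X => (Finset.mem_Icc.1 (u X).2).1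
    apply Prod.ext
    · apply Subtype.ext
      funext X
      apply Subtype.ext
      show |if s X then ((u X : ℤ)) else -(u X : ℤ)| = (u X : ℤ)
      have := hb X
      split_ifs <;> [rw [abs_of_pos (by omega)]; rw [abs_neg, abs_of_pos (by omega)]]
    · funext X
      show decide (0 < if s X then ((u X : ℤ)) else -(u X : ℤ)) = s X
      have := hb X
      cases hs : s X <;> simp [hs] <;> omega

lemma card_fiber (P : BPartition n) (m : ℕ) :
    ((tF n m).filter (fun f => Phi f = P)).card =
      2 ^ (PosB P).card * Nat.descFactorial m (PosB P).card := by
  classical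
  have e1 : ↥((tF n m).filter (fun f => Phi f = P)) ≃
      {f : Fin n → ℤ // f ∈ tF n m ∧ Phi f = P} :=
    Equiv.subtypeEquivRight (fun f => by simp [Finset.mem_filter])
  rw [← Nat.card_eq_finsetCard,
    Nat.card_congr ((e1.trans (fibEquiv P m)).trans (signEquiv P m)), Nat.card_prod,
    Nat.card_congr (Equiv.subtypeInjectiveEquivEmbedding _ _), Nat.card_eq_fintype_card,
    Nat.card_eq_fintype_card, Fintype.card_embedding_eq, Fintype.card_fun]
  simp only [Fintype.card_coe, Fintype.card_bool]
  rw [Int.card_Icc]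
  have h2 : ((m:ℤ) + 1 - 1).toNat = m := by omega
  rw [h2]
  ring

end FibEquiv

lemma card_tF (n m : ℕ) : (tF n m).card = (2*m+1)^n := by
  rw [tF, Fintype.card_piFinset]
  have h : (Finset.Icc (-(m:ℤ)) m).card = 2*m+1 := by
    rw [Int.card_Icc]; omega
  rw [Finset.prod_congr rfl (fun i _ => h), Finset.prod_const, Finset.card_univ,
    Fintype.card_fin]

lemma SD_eq_filter (n r : ℕ) :
    SD n r = ((Finset.univ : Finset (BPartition n)).filter
      (fun P => IsDPartition P ∧ hasPairs P r)).card := by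
  classical
  rw [SD, Nat.card_eq_fintype_card, Fintype.card_subtype]

lemma card_zc_one (n m : ℕ) :
    ((tF n m).filter (fun f => zc f = 1)).card = n * (2*m)^(n-1) := by
  classical
  have hA : (tF n m).filter (fun f => zc f = 1) =
      (Finset.univ : Finset (Fin n)).biUnion (fun i => Fintype.piFinset
        (fun j => if j = i then ({0} : Finset ℤ) else (Finset.Icc (-(m:ℤ)) m).erase 0)) := by
    ext f
    simp only [Finset.mem_filter, Finset.mem_biUnion, Finset.mem_univ, true_and,
      Fintype.mem_piFinset]
    constructor
    · rintro ⟨hft, hzc⟩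
      obtain ⟨i, hi⟩ := Finset.card_eq_one.1 hzc
      refine ⟨i, fun j => ?_⟩
      by_cases hj : j = i
      · subst hj
        rw [if_pos rfl, Finset.mem_singleton]
        have hmem : j ∈ Finset.univ.filter (fun i => f i = 0) := by
          rw [hi]; exact Finset.mem_singleton_self j
        exact (Finset.mem_filter.1 hmem).2
      · rw [if_neg hj, Finset.mem_erase]
        refine ⟨?_, Finset.mem_Icc.2 (abs_le.1 (mem_tF.1 hft j))⟩
        intro h0
        have hmem : j ∈ Finset.univ.filter (fun i => f i = 0) :=
          Finset.mem_filter.2 ⟨Finset.mem_univ _, h0⟩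
        rw [hi] at hmem
        exact hj (Finset.mem_singleton.1 hmem)
    · rintro ⟨i, hf⟩
      have hfi : f i = 0 := by
        have := hf i
        rw [if_pos rfl, Finset.mem_singleton] at this
        exact this
      constructor
      · rw [mem_tF]
        intro j
        by_cases hj : j = i
        · subst hj; rw [hfi]; simp
        · have := hf j
          rw [if_neg hj, Finset.mem_erase, Finset.mem_Icc] at this
          exact abs_le.2 this.2
      · show (Finset.univ.filter (fun i => f i = 0)).card = 1
        rw [show Finset.univ.filter (fun i => f i = 0) = {i} from ?_, Finset.card_singleton]
        rw [Finset.eq_singleton_iff_unique_mem]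
        refine ⟨Finset.mem_filter.2 ⟨Finset.mem_univ _, hfi⟩, fun j hj => ?_⟩
        by_contra hji
        have := hf j
        rw [if_neg hji, Finset.mem_erase] at this
        exact this.1 (Finset.mem_filter.1 hj).2
  rw [hA, Finset.card_biUnion]
  · have hone : ∀ i : Fin n, (Fintype.piFinset
        (fun j => if j = i then ({0} : Finset ℤ)
          else (Finset.Icc (-(m:ℤ)) m).erase 0)).card = (2*m)^(n-1) := by
      intro i
      rw [Fintype.card_piFinset, ← Finset.prod_erase_mul _ _ (Finset.mem_univ i),
        if_pos rfl, Finset.card_singleton, mul_one]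
      have h2 : ∀ j ∈ Finset.univ.erase i,
          (if j = i then ({0}:Finset ℤ) else (Finset.Icc (-(m:ℤ)) m).erase 0).card = 2*m := by
        intro j hj
        rw [if_neg (Finset.mem_erase.1 hj).1, Finset.card_erase_of_mem (by simp),
          Int.card_Icc]
        omega
      rw [Finset.prod_congr rfl h2, Finset.prod_const,
        Finset.card_erase_of_mem (Finset.mem_univ i), Finset.card_univ, Fintype.card_fin]
    rw [Finset.sum_congr rfl (fun i _ => hone i), Finset.sum_const, Finset.card_univ,
      Fintype.card_fin, smul_eq_mul]
  · intro i _ i' _ hne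
    refine Finset.disjoint_left.2 fun f h1 h2 => ?_
    have hi := Fintype.mem_piFinset.1 h1 i
    have hi' := Fintype.mem_piFinset.1 h2 i
    rw [if_pos rfl, Finset.mem_singleton] at hi
    rw [if_neg (by exact fun h => hne h), Finset.mem_erase] at hi'
    exact hi'.1 hi

lemma star (n m : ℕ) :
    (2*m+1)^n = (∑ k ∈ Finset.range (n+1), SD n k * (2^k * Nat.descFactorial m k))
      + n * (2*m)^(n-1) := by
  classical
  have hsplit := Finset.card_filter_add_card_filter_not
    (s := tF n m) (p := fun f => zc f = 1)
  have hB : ((tF n m).filter (fun f => ¬ zc f = 1)).card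
      = ∑ k ∈ Finset.range (n+1), SD n k * (2^k * Nat.descFactorial m k) := by
    set DFin := (Finset.univ : Finset (BPartition n)).filter (fun P => IsDPartition P)
      with hDF
    have hmaps : ∀ f ∈ (tF n m).filter (fun f => ¬ zc f = 1), Phi f ∈ DFin := by
      intro f hf
      rw [hDF, Finset.mem_filter]
      exact ⟨Finset.mem_univ _, (isD_Phi_iff f).2 (Finset.mem_filter.1 hf).2⟩
    rw [Finset.card_eq_sum_card_fiberwise hmaps]
    have hfib : ∀ P ∈ DFin,
        (((tF n m).filter (fun f => ¬ zc f = 1)).filter (fun f => Phi f = P)).card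
          = 2 ^ (PosB P).card * Nat.descFactorial m (PosB P).card := by
      intro P hP
      rw [← card_fiber P m]
      congr 1
      ext f
      simp only [Finset.mem_filter]
      constructor
      · rintro ⟨⟨h1, h2⟩, h3⟩
        exact ⟨h1, h3⟩
      · rintro ⟨h1, h3⟩
        refine ⟨⟨h1, ?_⟩, h3⟩
        have hD : IsDPartition (Phi f) := by
          rw [h3]; exact (Finset.mem_filter.1 hP).2
        exact (isD_Phi_iff f).1 hD
    rw [Finset.sum_congr rfl hfib]
    have hgroup := (Finset.sum_fiberwise_of_maps_to (s := DFin)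
      (g := fun P : BPartition n => (PosB P).card) (t := Finset.range (n+1))
      (fun P _ => Finset.mem_range.2 (Nat.lt_succ_of_le (PosB_card_le P)))
      (fun P => 2 ^ (PosB P).card * Nat.descFactorial m (PosB P).card)).symm
    rw [hgroup]
    apply Finset.sum_congr rfl
    intro k _
    have hfilter : DFin.filter (fun P => (PosB P).card = k)
        = (Finset.univ : Finset (BPartition n)).filter
            (fun P => IsDPartition P ∧ hasPairs P k) := by
      rw [hDF, Finset.filter_filter]
      apply Finset.filter_congr
      intro P _
      exact ⟨fun ⟨h1, h2⟩ => ⟨h1, (hasPairs_iff P k).2 h2⟩,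
        fun ⟨h1, h2⟩ => ⟨h1, (hasPairs_iff P k).1 h2⟩⟩
    calc ∑ P ∈ DFin.filter (fun P => (PosB P).card = k),
          2 ^ (PosB P).card * Nat.descFactorial m (PosB P).card
        = ∑ _P ∈ DFin.filter (fun P => (PosB P).card = k),
            2 ^ k * Nat.descFactorial m k := by
          apply Finset.sum_congr rfl
          intro P hP
          rw [(Finset.mem_filter.1 hP).2]
      _ = SD n k * (2 ^ k * Nat.descFactorial m k) := by
          rw [Finset.sum_const, smul_eq_mul, hfilter, ← SD_eq_filter]
  have htot := card_tF n m
  have hAc := card_zc_one n m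
  omega

lemma negSet_singleton (a : ℤ) : negSet {a} = {-a} := by
  ext x
  rw [mem_negSet, Finset.mem_singleton, Finset.mem_singleton]
  omega

noncomputable def P0 (n : ℕ) : BPartition n where
  blocks := (ES n).image (fun x => {x})
  cover := by
    intro x
    rw [show (x ≠ 0 ∧ |x| ≤ (n:ℤ)) ↔ x ∈ ES n from mem_ES.symm]
    constructor
    · intro hx
      exact ⟨{x}, Finset.mem_image_of_mem _ hx, Finset.mem_singleton_self x⟩
    · rintro ⟨C, hC, hxC⟩
      obtain ⟨a, ha, rfl⟩ := Finset.mem_image.1 hC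
      rw [Finset.mem_singleton] at hxC
      rw [hxC]
      exact ha
  nonempty := by
    rintro C hC
    obtain ⟨a, ha, rfl⟩ := Finset.mem_image.1 hC
    exact ⟨a, Finset.mem_singleton_self a⟩
  disj := by
    rintro C hC C' hC' hne
    obtain ⟨a, ha, rfl⟩ := Finset.mem_image.1 hC
    obtain ⟨b, hb, rfl⟩ := Finset.mem_image.1 hC'
    refine Finset.disjoint_left.2 fun x hx hx' => hne ?_
    rw [Finset.mem_singleton] at hx hx'
    rw [← hx, ← hx']
  closed := by
    rintro C hC
    obtain ⟨a, ha, rfl⟩ := Finset.mem_image.1 hC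
    rw [negSet_singleton]
    exact Finset.mem_image_of_mem _ (neg_mem_ES ha)
  zeroUnique := by
    rintro C hC C' hC' h h'
    exfalso
    obtain ⟨a, ha, rfl⟩ := Finset.mem_image.1 hC
    rw [negSet_singleton] at h
    have : -a = a := by
      have := Finset.mem_singleton.1 (h ▸ Finset.mem_singleton_self (-a))
      exact this
    have ha0 : a = 0 := by omega
    exact (mem_ES.1 ha).1 ha0

lemma isD_P0 (n : ℕ) : IsDPartition (P0 n) := by
  intro C hC h
  exfalso
  obtain ⟨a, ha, rfl⟩ := Finset.mem_image.1 hC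
  rw [negSet_singleton] at h
  have : -a = a := Finset.mem_singleton.1 (h ▸ Finset.mem_singleton_self (-a))
  exact (mem_ES.1 ha).1 (by omega)

lemma hasPairs_P0 (n : ℕ) : hasPairs (P0 n) n := by
  rw [hasPairs]
  have hfil : (P0 n).blocks.filter (fun C => negSet C ≠ C) = (P0 n).blocks := by
    apply Finset.filter_true_of_mem
    intro C hC
    obtain ⟨a, ha, rfl⟩ := Finset.mem_image.1 hC
    rw [negSet_singleton]
    intro h
    have : -a = a := Finset.mem_singleton.1 (h ▸ Finset.mem_singleton_self (-a))
    exact (mem_ES.1 ha).1 (by omega)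
  rw [hfil, show (P0 n).blocks = (ES n).image (fun x => {x}) from rfl,
    Finset.card_image_of_injective _ Finset.singleton_injective, card_ES]

lemma eq_P0 {n : ℕ} (P : BPartition n) (hp : hasPairs P n) : P = P0 n := by
  have h2 : (NZB P).card = 2*n := hp
  have hle := card_blocks_le P
  have hsub : NZB P ⊆ P.blocks := Finset.filter_subset _ _
  have hcle : P.blocks.card ≤ (NZB P).card := by
    have := Finset.card_le_card hsub
    omega
  have hbc : P.blocks.card = 2*n := by
    have := Finset.card_le_card hsub
    omega
  have hall1 : ∀ C ∈ P.blocks, C.card = 1 := by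
    by_contra hcon
    push_neg at hcon
    obtain ⟨C0, hC0, hneq⟩ := hcon
    have h1 : ∀ C ∈ P.blocks, 1 ≤ C.card :=
      fun C hC => Finset.card_pos.2 (block_nonempty hC)
    have hlt : ∑ _C ∈ P.blocks, 1 < ∑ C ∈ P.blocks, C.card :=
      Finset.sum_lt_sum h1 ⟨C0, hC0, by have := h1 C0 hC0; omega⟩
    rw [sum_card_blocks, Finset.sum_const, smul_eq_mul, mul_one, hbc] at hlt
    omega
  apply BPartition.ext'
  ext C
  rw [show (P0 n).blocks = (ES n).image (fun x => {x}) from rfl, Finset.mem_image]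
  constructor
  · intro hC
    obtain ⟨a, rfl⟩ := Finset.card_eq_one.1 (hall1 C hC)
    exact ⟨a, block_subset_ES hC (Finset.mem_singleton_self a), rfl⟩
  · rintro ⟨x, hx, rfl⟩
    obtain ⟨D, hD, hxD⟩ := (P.cover x).1 (mem_ES.1 hx)
    obtain ⟨a, ha⟩ := Finset.card_eq_one.1 (hall1 D hD)
    rw [ha, Finset.mem_singleton] at hxD
    rw [← hxD] at ha
    rw [← ha]
    exact hD

lemma SD_nn (n : ℕ) : SD n n = 1 := by
  classical
  rw [SD_eq_filter, Finset.card_eq_one]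
  refine ⟨P0 n, ?_⟩
  rw [Finset.eq_singleton_iff_unique_mem]
  refine ⟨Finset.mem_filter.2 ⟨Finset.mem_univ _, isD_P0 n, hasPairs_P0 n⟩, fun P hP => ?_⟩
  exact eq_P0 P (Finset.mem_filter.1 hP).2.2

lemma prod_real (m k : ℕ) :
    ∏ j ∈ Finset.Icc 1 k, ((2*(m:ℝ)+1) - (2*(j:ℝ) - 1))
      = (2:ℝ)^k * (Nat.descFactorial m k : ℝ) := by
  induction k with
  | zero => simp
  | succ k ih =>
    rw [Finset.prod_Icc_succ_top (by omega : 1 ≤ k+1), ih]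
    by_cases h : m < k
    · rw [Nat.descFactorial_eq_zero_iff_lt.2 h, Nat.descFactorial_eq_zero_iff_lt.2 (by omega)]
      simp
    · rw [Nat.descFactorial_succ]
      push_cast [Nat.cast_sub (not_lt.1 h)]
      ring

lemma real_eq (n : ℕ) (hn : 1 ≤ n) (m : ℕ) :
    (2*(m:ℝ)+1) ^ n = (∑ k ∈ Finset.range (n + 1), (SD n k : ℝ) *
        (if k = n then ((2*(m:ℝ)+1) - ((n : ℝ) - 1)) *
            ∏ j ∈ Finset.Icc 1 (n - 1), ((2*(m:ℝ)+1) - (2 * (j : ℝ) - 1))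
         else ∏ j ∈ Finset.Icc 1 k, ((2*(m:ℝ)+1) - (2 * (j : ℝ) - 1)))) +
      (n : ℝ) * (((2*(m:ℝ)+1) - 1) ^ (n - 1) -
        ∏ j ∈ Finset.Icc 1 (n - 1), ((2*(m:ℝ)+1) - (2 * (j : ℝ) - 1))) := by
  have hR : (2*(m:ℝ)+1)^n = (∑ k ∈ Finset.range (n+1),
      (SD n k : ℝ) * ((2:ℝ)^k * (Nat.descFactorial m k : ℝ)))
        + (n:ℝ) * (2*(m:ℝ))^(n-1) := by
    exact_mod_cast star n m
  have hPn : (2:ℝ)^n * (Nat.descFactorial m n : ℝ) =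
      (∏ j ∈ Finset.Icc 1 (n-1), ((2*(m:ℝ)+1) - (2*(j:ℝ) - 1)))
        * ((2*(m:ℝ)+1) - (2*(n:ℝ) - 1)) := by
    rw [← prod_real]
    have hn1 : n - 1 + 1 = n := by omega
    rw [← hn1, Finset.prod_Icc_succ_top (by omega : 1 ≤ n - 1 + 1)]
    simp
  have hbase : (2*(m:ℝ)+1 - 1) = 2*(m:ℝ) := by ring
  rw [hbase, Finset.sum_range_succ, if_pos rfl, SD_nn]
  rw [Finset.sum_range_succ, SD_nn] at hR
  have hsum : ∑ k ∈ Finset.range n, (SD n k : ℝ) *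
      (if k = n then ((2*(m:ℝ)+1) - ((n : ℝ) - 1)) *
          ∏ j ∈ Finset.Icc 1 (n - 1), ((2*(m:ℝ)+1) - (2 * (j : ℝ) - 1))
       else ∏ j ∈ Finset.Icc 1 k, ((2*(m:ℝ)+1) - (2 * (j : ℝ) - 1)))
      = ∑ k ∈ Finset.range n, (SD n k : ℝ) * ((2:ℝ)^k * (Nat.descFactorial m k : ℝ)) := by
    apply Finset.sum_congr rfl
    intro k hk
    have hkn : k ≠ n := by
      have := Finset.mem_range.1 hk
      omega
    rw [if_neg hkn, prod_real]
  rw [hsum]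
  push_cast
  push_cast at hR
  linear_combination hR + hPn

end FDaux


/-- `x^n = Σ_{k=0}^{n} S_D(n,k) · [x]_k^D + n·((x−1)^{n−1} − (x−1)(x−3)⋯(x−(2n−3)))`. -/
theorem falling_factorial_typeD (n : ℕ) (hn : 1 ≤ n) (x : ℝ) :
    x ^ n = (∑ k ∈ Finset.range (n + 1), (SD n k : ℝ) *
        (if k = n then (x - ((n : ℝ) - 1)) * ∏ j ∈ Finset.Icc 1 (n - 1), (x - (2 * (j : ℝ) - 1))
         else ∏ j ∈ Finset.Icc 1 k, (x - (2 * (j : ℝ) - 1)))) +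
      (n : ℝ) * ((x - 1) ^ (n - 1) - ∏ j ∈ Finset.Icc 1 (n - 1), (x - (2 * (j : ℝ) - 1))) := by
  classical
  set q : Polynomial ℝ := (∑ k ∈ Finset.range (n+1), Polynomial.C (SD n k : ℝ) *
      (if k = n then (Polynomial.X - Polynomial.C ((n:ℝ) - 1)) *
          ∏ j ∈ Finset.Icc 1 (n-1), (Polynomial.X - Polynomial.C (2*(j:ℝ) - 1))
       else ∏ j ∈ Finset.Icc 1 k, (Polynomial.X - Polynomial.C (2*(j:ℝ) - 1)))) +
    Polynomial.C (n:ℝ) * ((Polynomial.X - Polynomial.C 1)^(n-1) -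
      ∏ j ∈ Finset.Icc 1 (n-1), (Polynomial.X - Polynomial.C (2*(j:ℝ)-1))) with hq
  have heval : ∀ y : ℝ, Polynomial.eval y q =
      (∑ k ∈ Finset.range (n + 1), (SD n k : ℝ) *
        (if k = n then (y - ((n : ℝ) - 1)) * ∏ j ∈ Finset.Icc 1 (n - 1), (y - (2 * (j : ℝ) - 1))
         else ∏ j ∈ Finset.Icc 1 k, (y - (2 * (j : ℝ) - 1)))) +
      (n : ℝ) * ((y - 1) ^ (n - 1) - ∏ j ∈ Finset.Icc 1 (n - 1), (y - (2 * (j : ℝ) - 1))) := by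
    intro y
    simp only [hq, Polynomial.eval_add, Polynomial.eval_mul, Polynomial.eval_finset_sum,
      Polynomial.eval_prod, Polynomial.eval_sub, Polynomial.eval_pow, Polynomial.eval_X,
      Polynomial.eval_C, apply_ite (Polynomial.eval y)]
  have hpq : (Polynomial.X ^ n : Polynomial ℝ) = q := by
    apply Polynomial.eq_of_infinite_eval_eq
    have hinj : Function.Injective (fun m : ℕ => 2*(m:ℝ)+1) := by
      intro a b hab
      have h1 : 2*(a:ℝ)+1 = 2*(b:ℝ)+1 := hab
      have h2 : (a:ℝ) = (b:ℝ) := by linarith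
      exact_mod_cast h2
    have hinf : (Set.range (fun m : ℕ => 2*(m:ℝ)+1)).Infinite :=
      Set.infinite_range_of_injective hinj
    apply hinf.mono
    rintro y ⟨m, rfl⟩
    simp only [Set.mem_setOf_eq, Polynomial.eval_pow, Polynomial.eval_X, heval]
    exact FDaux.real_eq n hn m
  have hfin := congrArg (Polynomial.eval x) hpq
  rw [Polynomial.eval_pow, Polynomial.eval_X, heval] at hfin
  exact hfin
end

section
/- For all integers n ≥ 1 and m ≥ 0, the number of vectors v = (v_1,…,v_n) ∈ ℤ^n such that |v_i| ≤ m for all i, and v_i ≠ v_j and v_i ≠ −v_j for all i ≠ j, equals (2m + 2 − n) · ∏_{k=1}^{n−1} (2m + 2 − 2k) (the number of integer lattice points of the cube {−m,…,m}^n lying on none of the hyperplanes of the type-D Coxeter arrangement x_i = ±x_j). -/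
open Classical Finset

/-! ### Auxiliary material for the lattice point count -/

open Function

section equivs
variable (m : ℕ)

/-- nonzero vectors -/
private def NZ (n : ℕ) := {v : Fin n → ℤ // (∀ i, |v i| ≤ (m:ℤ)) ∧ Injective (fun i => |v i|) ∧ ∀ i, v i ≠ 0}

private noncomputable def nzEquiv (n : ℕ) : NZ m n ≃ (Fin n ↪ Fin m) × (Fin n → Bool) where
  toFun v := by
    refine ⟨⟨fun i => ⟨(v.1 i).natAbs - 1, ?_⟩, ?_⟩, fun i => decide (0 < v.1 i)⟩
    · have h1 := v.2.1 i
      have h2 := v.2.2.2 i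
      rw [Int.abs_eq_natAbs] at h1
      omega
    · intro i j hij
      apply v.2.2.1
      have h2i := v.2.2.2 i
      have h2j := v.2.2.2 j
      simp only [Fin.mk.injEq] at hij
      simp only [Int.abs_eq_natAbs]
      omega
  invFun fs := ⟨fun i => if fs.2 i then ((fs.1 i : ℤ) + 1) else -((fs.1 i : ℤ) + 1), by
    have habs : ∀ i, |(if fs.2 i then ((fs.1 i : ℤ) + 1) else -((fs.1 i : ℤ) + 1))|
        = (fs.1 i : ℤ) + 1 := by
      intro i; split <;> rw [abs_eq (by positivity)] <;> simp
    refine ⟨fun i => ?_, fun i j hij => ?_, fun i => ?_⟩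
    · have := (fs.1 i).2; rw [habs]; omega
    · simp only [habs] at hij
      have : (fs.1 i : ℕ) = (fs.1 j : ℕ) := by omega
      exact fs.1.injective (Fin.ext this)
    · dsimp only; split <;> intro h <;> omega⟩
  left_inv v := by
    apply Subtype.ext
    funext i
    have h2 := v.2.2.2 i
    simp only
    split
    · next h =>
        simp only [decide_eq_true_eq] at h
        show (((v.1 i).natAbs - 1 : ℕ) : ℤ) + 1 = v.1 i
        omega
    · next h =>
        simp only [decide_eq_true_eq, not_lt] at h
        show -((((v.1 i).natAbs - 1 : ℕ) : ℤ) + 1) = v.1 i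
        omega
  right_inv fs := by
    ext i
    · show (if fs.2 i = true then ((fs.1 i : ℕ) : ℤ) + 1 else -(((fs.1 i : ℕ) : ℤ) + 1)).natAbs - 1 = (fs.1 i : ℕ)
      split <;> omega
    · dsimp only
      by_cases hfs : fs.2 i = true <;> simp [hfs] <;> omega

end equivs

section zpart
variable (m : ℕ)

private noncomputable def zEquiv (n : ℕ) :
    {v : Fin (n+1) → ℤ // (∀ i, |v i| ≤ (m:ℤ)) ∧ Injective (fun i => |v i|) ∧ ∃ i, v i = 0}
      ≃ Fin (n+1) × NZ m n where
  toFun v := by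
    refine ⟨v.2.2.2.choose, fun j => v.1 (v.2.2.2.choose.succAbove j), fun j => v.2.1 _,
      fun j k h => ?_, fun j => fun h0 => ?_⟩
    · have := v.2.2.1 h
      exact (Fin.succAbove_right_injective (p := v.2.2.2.choose)) this
    · dsimp only at h0
      have h1 : |v.1 (v.2.2.2.choose.succAbove j)| = |v.1 v.2.2.2.choose| := by
        rw [h0, v.2.2.2.choose_spec]
      have := v.2.2.1 h1
      exact Fin.succAbove_ne _ j this
  invFun iw := by
    obtain ⟨i, w⟩ := iw
    refine ⟨i.insertNth 0 w.1, fun a => ?_, fun a b hab => ?_, ⟨i, by simp⟩⟩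
    · rcases eq_or_ne a i with rfl | ha
      · simp
      · obtain ⟨j, rfl⟩ := Fin.exists_succAbove_eq ha
        rw [Fin.insertNth_apply_succAbove]
        exact w.2.1 j
    · simp only at hab
      have key : ∀ c : Fin (n+1), c ≠ i → |(Fin.insertNth (α := fun _ => ℤ) i 0 w.1) c| ≠ 0 := by
        intro c hc
        obtain ⟨j, rfl⟩ := Fin.exists_succAbove_eq hc
        rw [Fin.insertNth_apply_succAbove]
        simpa using w.2.2.2 j
      by_cases ha : a = i <;> by_cases hb : b = i
      · rw [ha, hb]
      · exfalso; apply key b hb; rw [← hab, ha]; simp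
      · exfalso; apply key a ha; rw [hab, hb]; simp
      · obtain ⟨j, rfl⟩ := Fin.exists_succAbove_eq ha
        obtain ⟨k, rfl⟩ := Fin.exists_succAbove_eq hb
        rw [Fin.insertNth_apply_succAbove, Fin.insertNth_apply_succAbove] at hab
        exact congrArg i.succAbove (w.2.2.1 hab)
  left_inv v := by
    apply Subtype.ext
    have hv := v.2.2.2.choose_spec
    have key := Fin.insertNth_self_removeNth v.2.2.2.choose v.1
    rw [hv] at key
    exact key
  right_inv iw := by
    obtain ⟨i, w⟩ := iw
    have h0 : ∀ p : ∃ j, (Fin.insertNth (α := fun _ => ℤ) i 0 w.1) j = 0, p.choose = i := by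
      intro p
      have h1 : |(Fin.insertNth (α := fun _ => ℤ) i 0 w.1) p.choose| = 0 := by
        rw [p.choose_spec]; simp
      have key : ∀ c : Fin (n+1), c ≠ i → |(Fin.insertNth (α := fun _ => ℤ) i 0 w.1) c| ≠ 0 := by
        intro c hc
        obtain ⟨j, rfl⟩ := Fin.exists_succAbove_eq hc
        rw [Fin.insertNth_apply_succAbove]
        simpa using w.2.2.2 j
      by_contra hne
      exact key p.choose hne h1
    refine Prod.ext (h0 _) (Subtype.ext (funext fun j => ?_))
    simp only [h0]
    rw [Fin.insertNth_apply_succAbove]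

end zpart

private lemma descFactorial_cast (m : ℕ) : ∀ k : ℕ, ((m.descFactorial k : ℤ)) = ∏ i ∈ range k, ((m : ℤ) - i)
  | 0 => by simp
  | (k+1) => by
      rw [Nat.descFactorial_succ, prod_range_succ, ← descFactorial_cast m k]
      rcases le_or_gt k m with h | h
      · push_cast [Nat.cast_sub h]; ring
      · have h0 : m.descFactorial k = 0 := Nat.descFactorial_eq_zero_iff_lt.2 h
        have hz : ∏ i ∈ range k, ((m:ℤ) - i) = 0 :=
          Finset.prod_eq_zero (Finset.mem_range.2 h) (by simp)
        rw [← descFactorial_cast m k] at hz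
        simp [h0]

private lemma cond_iff {n : ℕ} (v : Fin n → ℤ) :
    (∀ i j, i ≠ j → v i ≠ v j ∧ v i ≠ -v j) ↔ Injective fun i => |v i| := by
  constructor
  · intro h i j hij
    simp only at hij
    by_contra hne
    rcases abs_eq_abs.1 hij with h1 | h1
    exacts [(h i j hne).1 h1, (h i j hne).2 h1]
  · intro h i j hij
    refine ⟨fun he => hij (h ?_), fun he => hij (h ?_)⟩ <;> simp [he, abs_neg]

/-- The number of lattice points of `{−m,…,m}^n` on none of the hyperplanes of the
type `D` Coxeter arrangement equals `(2m + 2 − n) · ∏_{k=1}^{n−1} (2m + 2 − 2k)`. -/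

theorem lattice_points_typeD (n m : ℕ) (hn : 1 ≤ n) :
    (Nat.card { v : Fin n → ℤ //
        (∀ i, |v i| ≤ (m : ℤ)) ∧
        ∀ i j, i ≠ j → v i ≠ v j ∧ v i ≠ -v j } : ℤ) =
      (2 * (m : ℤ) + 2 - (n : ℤ)) *
        ∏ k ∈ Finset.Icc 1 (n - 1), (2 * (m : ℤ) + 2 - 2 * (k : ℤ)) := by
  obtain ⟨n', rfl⟩ : ∃ n', n = n' + 1 := ⟨n - 1, by omega⟩
  -- step 1: replace condition by injectivity
  have e1 : { v : Fin (n'+1) → ℤ //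
        (∀ i, |v i| ≤ (m : ℤ)) ∧
        ∀ i j, i ≠ j → v i ≠ v j ∧ v i ≠ -v j }
      ≃ {v : Fin (n'+1) → ℤ // (∀ i, |v i| ≤ (m:ℤ)) ∧ Injective fun i => |v i|} :=
    Equiv.subtypeEquivRight fun v => and_congr_right fun _ => cond_iff v
  -- step 2: split on whether some coordinate is zero
  have e2 : {v : Fin (n'+1) → ℤ // (∀ i, |v i| ≤ (m:ℤ)) ∧ Injective fun i => |v i|}
      ≃ NZ m (n'+1) ⊕
        {v : Fin (n'+1) → ℤ // (∀ i, |v i| ≤ (m:ℤ)) ∧ (Injective fun i => |v i|) ∧ ∃ i, v i = 0} := by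
    refine (Equiv.sumCompl fun v : {v : Fin (n'+1) → ℤ //
        (∀ i, |v i| ≤ (m:ℤ)) ∧ Injective fun i => |v i|} => ∀ i, v.1 i ≠ 0).symm.trans
      (Equiv.sumCongr ?_ ?_)
    · exact (Equiv.subtypeSubtypeEquivSubtypeInter
          (fun v : Fin (n'+1) → ℤ => (∀ i, |v i| ≤ (m:ℤ)) ∧ Injective fun i => |v i|)
          (fun v => ∀ i, v i ≠ 0)).trans
        (Equiv.subtypeEquivRight fun v => by tauto)
    · refine (Equiv.subtypeSubtypeEquivSubtypeInter
          (fun v : Fin (n'+1) → ℤ => (∀ i, |v i| ≤ (m:ℤ)) ∧ Injective fun i => |v i|)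
          (fun v => ¬∀ i, v i ≠ 0)).trans
        (Equiv.subtypeEquivRight fun v => ?_)
      push_neg
      tauto
  have E := (e1.trans e2).trans
    ((nzEquiv m (n'+1)).sumCongr (zEquiv m n'|>.trans (Equiv.prodCongr (Equiv.refl _) (nzEquiv m n'))))
  have hcard : Nat.card { v : Fin (n'+1) → ℤ //
        (∀ i, |v i| ≤ (m : ℤ)) ∧
        ∀ i j, i ≠ j → v i ≠ v j ∧ v i ≠ -v j }
      = m.descFactorial (n'+1) * 2^(n'+1) + (n'+1) * (m.descFactorial n' * 2^n') := by
    rw [Nat.card_congr E]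
    simp [Nat.card_eq_fintype_card, Fintype.card_embedding_eq, mul_assoc]
  rw [hcard]
  -- now pure arithmetic
  have hprod : ∏ k ∈ Finset.Icc 1 ((n'+1) - 1), (2 * (m : ℤ) + 2 - 2 * (k : ℤ))
      = 2^n' * ∏ j ∈ range n', ((m:ℤ) - j) := by
    rw [show (n'+1) - 1 = n' from rfl, ← Finset.Ico_add_one_right_eq_Icc, Finset.prod_Ico_eq_prod_range]
    rw [show n' + 1 - 1 = n' from rfl]
    rw [show (2:ℤ)^n' * ∏ j ∈ range n', ((m:ℤ) - j) = ∏ j ∈ range n', 2 * ((m:ℤ) - j) by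
      rw [Finset.prod_mul_distrib, Finset.prod_const, Finset.card_range]]
    refine Finset.prod_congr rfl fun j _ => ?_
    push_cast
    ring
  rw [hprod]
  push_cast [descFactorial_cast, prod_range_succ]
  ring
end

section
/- For all integers n ≥ 1 and 0 ≤ r ≤ n, one has r! · S(n,r) = Σ_{k=0}^{r} A(n,k) · C(n−k, r−k), where C(a,b) denotes the binomial coefficient. -/
open Classical Finset

/-! ### Auxiliary material for `stirling_eulerian_typeA` -/

private lemma ivt_aux (g : ℕ → ℕ) (h0 : g 0 = 0) (hstep : ∀ j, g (j + 1) ≤ g j + 1) :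
    ∀ N m, m ≤ g N → ∃ j, j ≤ N ∧ g j = m := by
  intro N
  induction N with
  | zero => intro m hm; exact ⟨0, le_rfl, by omega⟩
  | succ N ih =>
    intro m hm
    by_cases h : m ≤ g N
    · obtain ⟨j, hj1, hj2⟩ := ih m h
      exact ⟨j, by omega, hj2⟩
    · have := hstep N
      exact ⟨N + 1, le_rfl, by omega⟩

private lemma filter_lt_succ_card (S : Finset ℕ) (j : ℕ) :
    (S.filter (· < j + 1)).card = (S.filter (· < j)).card + (if j ∈ S then 1 else 0) := by
  classical
  have h1 : S.filter (· < j + 1) = S.filter (· < j) ∪ S.filter (· = j) := by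
    ext x
    simp only [Finset.mem_filter, Finset.mem_union, ← and_or_left]
    exact and_congr_right fun _ => by omega
  have hdisj : Disjoint (S.filter (· < j)) (S.filter (· = j)) := by
    rw [Finset.disjoint_left]
    intro a ha hb
    have h1 := (Finset.mem_filter.mp ha).2
    have h2 := (Finset.mem_filter.mp hb).2
    omega
  rw [h1, Finset.card_union_of_disjoint hdisj, Finset.filter_eq']
  split_ifs <;> simp

section TypeA

variable {n r : ℕ}

private noncomputable def keyF (f : Fin n → Fin r) : Fin n → Fin r ×ₗ Fin n :=
  fun i => toLex (f i, i)

private lemma keyF_injective (f : Fin n → Fin r) : Function.Injective (keyF f) := by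
  intro a b h
  exact congrArg (fun p => (ofLex p).2) h

private noncomputable def sortOf (f : Fin n → Fin r) : Equiv.Perm (Fin n) :=
  Tuple.sort (keyF f)

private lemma sort_lt (f : Fin n → Fin r) {a b : Fin n} (h : a < b) :
    f (sortOf f a) < f (sortOf f b) ∨
      (f (sortOf f a) = f (sortOf f b) ∧ sortOf f a < sortOf f b) := by
  have hs : StrictMono ((sortOf f).trans (Tuple.graphEquiv₁ (keyF f))) :=
    Tuple.eq_sort_iff'.mp rfl
  have h2 := hs h
  have h3 := (Prod.Lex.lt_iff (x := toLex (keyF f (sortOf f a), sortOf f a))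
    (y := toLex (keyF f (sortOf f b), sortOf f b))).mp h2
  rcases h3 with h4 | ⟨h4, h5⟩
  · exact Prod.Lex.lt_iff.mp h4
  · exact Or.inr ⟨congrArg (fun p => (ofLex p).1) h4, h5⟩

private lemma sort_mono (f : Fin n → Fin r) {a b : Fin n} (h : a ≤ b) :
    f (sortOf f a) ≤ f (sortOf f b) := by
  rcases eq_or_lt_of_le h with rfl | hlt
  · exact le_rfl
  · rcases sort_lt f hlt with h1 | ⟨h1, -⟩
    · exact le_of_lt h1
    · exact le_of_eq h1

private lemma sort_step (f : Fin n → Fin r) (hf : Function.Surjective f)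
    {j : ℕ} (hj : j + 1 < n)
    (hne : f (sortOf f ⟨j, Nat.lt_of_succ_lt hj⟩) ≠ f (sortOf f ⟨j + 1, hj⟩)) :
    (f (sortOf f ⟨j + 1, hj⟩) : ℕ) = (f (sortOf f ⟨j, Nat.lt_of_succ_lt hj⟩) : ℕ) + 1 := by
  set a : Fin n := ⟨j, Nat.lt_of_succ_lt hj⟩
  set b : Fin n := ⟨j + 1, hj⟩
  have hab : a < b := by simp [a, b, Fin.lt_def]
  have hflt : f (sortOf f a) < f (sortOf f b) := by
    rcases sort_lt f hab with h1 | ⟨h1, -⟩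
    · exact h1
    · exact absurd h1 hne
  have hv : (f (sortOf f a) : ℕ) + 1 < r := by
    have h1 : (f (sortOf f a) : ℕ) < (f (sortOf f b) : ℕ) := hflt
    have h2 := (f (sortOf f b)).isLt
    omega
  obtain ⟨i, hi⟩ := hf ⟨(f (sortOf f a) : ℕ) + 1, hv⟩
  set t := (sortOf f).symm i with ht
  have hti : sortOf f t = i := Equiv.apply_symm_apply _ _
  rcases le_or_gt t a with hta | hat
  · have h5 := sort_mono f hta
    rw [hti, hi] at h5
    have h6 : (f (sortOf f a) : ℕ) + 1 ≤ (f (sortOf f a) : ℕ) := Fin.le_def.mp h5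
    omega
  · have htb : b ≤ t := by
      have : (a : ℕ) < (t : ℕ) := hat
      exact Fin.le_def.mpr (by simp [a, b] at this ⊢; omega)
    have h5 := sort_mono f htb
    rw [hti, hi] at h5
    have h6 := Fin.le_def.mp h5
    have h7 : (f (sortOf f a) : ℕ) < (f (sortOf f b) : ℕ) := hflt
    simp at h6
    omega

private lemma sort_zero (f : Fin n → Fin r) (hf : Function.Surjective f)
    (h0 : 0 < n) (hr : 0 < r) : (f (sortOf f ⟨0, h0⟩) : ℕ) = 0 := by
  obtain ⟨i, hi⟩ := hf ⟨0, hr⟩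
  have hle : (⟨0, h0⟩ : Fin n) ≤ (sortOf f).symm i := Fin.le_def.mpr (by simp)
  have := sort_mono f hle
  rw [Equiv.apply_symm_apply, hi] at this
  have h2 : (f (sortOf f ⟨0, h0⟩) : ℕ) ≤ 0 := Fin.le_def.mp this
  omega

private lemma sort_last (f : Fin n → Fin r) (hf : Function.Surjective f)
    (h0 : 0 < n) (hr : 0 < r) :
    (f (sortOf f ⟨n - 1, by omega⟩) : ℕ) = r - 1 := by
  obtain ⟨i, hi⟩ := hf ⟨r - 1, by omega⟩
  have hle : (sortOf f).symm i ≤ (⟨n - 1, by omega⟩ : Fin n) := by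
    have := ((sortOf f).symm i).isLt
    exact Fin.le_def.mpr (by simp; omega)
  have h1 := sort_mono f hle
  rw [Equiv.apply_symm_apply, hi] at h1
  have h2 := Fin.le_def.mp h1
  have h3 := (f (sortOf f ⟨n - 1, by omega⟩)).isLt
  simp at h2
  omega

private noncomputable def barSet (f : Fin n → Fin r) : Finset ℕ :=
  (Finset.range (n - 1)).filter fun j =>
    ∃ h : j + 1 < n, f (sortOf f ⟨j + 1, h⟩) ≠ f (sortOf f ⟨j, Nat.lt_of_succ_lt h⟩)

private lemma barSet_subset (f : Fin n → Fin r) : barSet f ⊆ Finset.range (n - 1) :=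
  Finset.filter_subset _ _

private lemma mem_barSet_iff (f : Fin n → Fin r) {j : ℕ} (hj : j + 1 < n) :
    j ∈ barSet f ↔ f (sortOf f ⟨j + 1, hj⟩) ≠ f (sortOf f ⟨j, Nat.lt_of_succ_lt hj⟩) := by
  simp only [barSet, Finset.mem_filter, Finset.mem_range]
  constructor
  · rintro ⟨-, h, hne⟩
    exact hne
  · intro hne
    exact ⟨by omega, hj, hne⟩

private lemma sort_val (f : Fin n → Fin r) (hf : Function.Surjective f) (hr : 0 < r) :
    ∀ j (hj : j < n), (f (sortOf f ⟨j, hj⟩) : ℕ) = ((barSet f).filter (· < j)).card := by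
  intro j
  induction j with
  | zero =>
    intro hj
    rw [sort_zero f hf hj hr]
    symm
    simp [Finset.filter_eq_empty_iff]
  | succ j ih =>
    intro hj
    have hj' : j < n := Nat.lt_of_succ_lt hj
    rw [filter_lt_succ_card]
    by_cases hb : j ∈ barSet f
    · have hne := (mem_barSet_iff f hj).mp hb
      rw [sort_step f hf hj (Ne.symm hne), ih hj', if_pos hb]
    · have heq : f (sortOf f ⟨j + 1, hj⟩) = f (sortOf f ⟨j, hj'⟩) := by
        by_contra hne
        exact hb ((mem_barSet_iff f hj).mpr hne)
      rw [if_neg hb]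
      have := ih hj'
      rw [heq]
      omega

private lemma barSet_card (f : Fin n → Fin r) (hf : Function.Surjective f)
    (hn : 0 < n) (hr : 0 < r) : (barSet f).card = r - 1 := by
  have h1 : n - 1 < n := by omega
  have h2 := sort_val f hf hr (n - 1) h1
  rw [sort_last f hf hn hr] at h2
  rw [Finset.filter_true_of_mem] at h2
  · omega
  · intro x hx
    exact Finset.mem_range.mp (barSet_subset f hx)

private noncomputable def dSet (σ : Equiv.Perm (Fin n)) : Finset ℕ :=
  (Finset.range (n - 1)).filter fun i =>
    ∃ h : i + 1 < n, σ ⟨i + 1, h⟩ < σ ⟨i, Nat.lt_of_succ_lt h⟩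

private lemma dSet_subset (σ : Equiv.Perm (Fin n)) : dSet σ ⊆ Finset.range (n - 1) :=
  Finset.filter_subset _ _

private lemma dSet_subset_barSet (f : Fin n → Fin r) : dSet (sortOf f) ⊆ barSet f := by
  intro i hi
  simp only [dSet, Finset.mem_filter, Finset.mem_range] at hi
  obtain ⟨hi1, h, hlt⟩ := hi
  rw [mem_barSet_iff f h]
  intro heq
  have hab : (⟨i, Nat.lt_of_succ_lt h⟩ : Fin n) < ⟨i + 1, h⟩ := by simp [Fin.lt_def]
  rcases sort_lt f hab with hc | ⟨-, hc⟩
  · exact absurd heq.symm (ne_of_lt hc)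
  · exact absurd hlt (asymm hc)

private noncomputable def unsort (σ : Equiv.Perm (Fin n)) (S : Finset ℕ) (hr : 0 < r)
    (hcard : S.card = r - 1) : Fin n → Fin r :=
  fun i => ⟨(S.filter (· < ((σ.symm i : Fin n) : ℕ))).card, by
    have h1 := Finset.card_filter_le S (· < ((σ.symm i : Fin n) : ℕ))
    omega⟩

private lemma unsort_surjective (σ : Equiv.Perm (Fin n)) (S : Finset ℕ) (hr : 0 < r)
    (hn : 0 < n) (hsub : S ⊆ Finset.range (n - 1)) (hcard : S.card = r - 1) :
    Function.Surjective (unsort σ S hr hcard) := by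
  intro v
  have hg0 : (S.filter (· < 0)).card = 0 := by simp
  have hstep : ∀ j, (S.filter (· < j + 1)).card ≤ (S.filter (· < j)).card + 1 := by
    intro j; rw [filter_lt_succ_card]; split <;> omega
  have htop : (S.filter (· < n - 1)).card = r - 1 := by
    rw [Finset.filter_true_of_mem, hcard]
    intro x hx
    exact Finset.mem_range.mp (hsub hx)
  have hv : (v : ℕ) ≤ (S.filter (· < n - 1)).card := by
    rw [htop]; have := v.isLt; omega
  obtain ⟨j, hjle, hj⟩ := ivt_aux (fun j => (S.filter (· < j)).card) hg0 hstep (n - 1) v hv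
  have hjn : j < n := by omega
  refine ⟨σ ⟨j, hjn⟩, ?_⟩
  apply Fin.ext
  show (S.filter (· < ((σ.symm (σ ⟨j, hjn⟩) : Fin n) : ℕ))).card = (v : ℕ)
  rw [Equiv.symm_apply_apply]
  exact hj

private lemma sortOf_unsort (σ : Equiv.Perm (Fin n)) (S : Finset ℕ) (hr : 0 < r)
    (hsub : S ⊆ Finset.range (n - 1)) (hcard : S.card = r - 1) (hd : dSet σ ⊆ S) :
    sortOf (unsort σ S hr hcard) = σ := by
  set g := unsort σ S hr hcard with hg
  have key : ∀ (j : ℕ) (h : j + 1 < n),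
      keyF g (σ ⟨j, Nat.lt_of_succ_lt h⟩) < keyF g (σ ⟨j + 1, h⟩) := by
    intro j h
    have e1 : σ.symm (σ ⟨j, Nat.lt_of_succ_lt h⟩) = ⟨j, Nat.lt_of_succ_lt h⟩ :=
      Equiv.symm_apply_apply _ _
    have e2 : σ.symm (σ ⟨j + 1, h⟩) = ⟨j + 1, h⟩ := Equiv.symm_apply_apply _ _
    have hv1 : (g (σ ⟨j, Nat.lt_of_succ_lt h⟩) : ℕ) = (S.filter (· < j)).card := by
      show (S.filter (· < ((σ.symm (σ ⟨j, Nat.lt_of_succ_lt h⟩) : Fin n) : ℕ))).card = _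
      rw [e1]
    have hv2 : (g (σ ⟨j + 1, h⟩) : ℕ) = (S.filter (· < j + 1)).card := by
      show (S.filter (· < ((σ.symm (σ ⟨j + 1, h⟩) : Fin n) : ℕ))).card = _
      rw [e2]
    rw [show keyF g (σ ⟨j, Nat.lt_of_succ_lt h⟩) =
        toLex (g (σ ⟨j, Nat.lt_of_succ_lt h⟩), σ ⟨j, Nat.lt_of_succ_lt h⟩) from rfl,
      show keyF g (σ ⟨j + 1, h⟩) = toLex (g (σ ⟨j + 1, h⟩), σ ⟨j + 1, h⟩) from rfl,
      Prod.Lex.lt_iff]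
    by_cases hb : j ∈ S
    · left
      show g (σ ⟨j, Nat.lt_of_succ_lt h⟩) < g (σ ⟨j + 1, h⟩)
      rw [Fin.lt_def, hv1, hv2, filter_lt_succ_card, if_pos hb]
      omega
    · right
      constructor
      · show g (σ ⟨j, Nat.lt_of_succ_lt h⟩) = g (σ ⟨j + 1, h⟩)
        apply Fin.ext
        rw [hv1, hv2, filter_lt_succ_card, if_neg hb]
        omega
      · have hnd : j ∉ dSet σ := fun hmem => hb (hd hmem)
        have hnlt : ¬ σ ⟨j + 1, h⟩ < σ ⟨j, Nat.lt_of_succ_lt h⟩ := by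
          intro hlt
          exact hnd (by
            simp only [dSet, Finset.mem_filter, Finset.mem_range]
            exact ⟨by omega, h, hlt⟩)
        have hne : σ ⟨j, Nat.lt_of_succ_lt h⟩ ≠ σ ⟨j + 1, h⟩ := by
          intro he
          have := σ.injective he
          simp [Fin.ext_iff] at this
        exact lt_of_le_of_ne (not_lt.mp hnlt) hne
  have key2 : StrictMono fun i : Fin n => keyF g (σ i) := by
    cases n with
    | zero => intro a; exact absurd a.isLt (by omega)
    | succ m =>
      rw [Fin.strictMono_iff_lt_succ]
      intro i
      exact key i.val (Nat.succ_lt_succ i.isLt)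
  refine (Tuple.eq_sort_iff.mpr ⟨?_, ?_⟩).symm
  · exact key2.monotone
  · intro i j hij heq
    exact absurd (σ.injective (keyF_injective g heq)) (ne_of_lt hij)

private lemma barSet_unsort (σ : Equiv.Perm (Fin n)) (S : Finset ℕ) (hr : 0 < r)
    (hsub : S ⊆ Finset.range (n - 1)) (hcard : S.card = r - 1) (hd : dSet σ ⊆ S) :
    barSet (unsort σ S hr hcard) = S := by
  set g := unsort σ S hr hcard with hg
  have hσ : sortOf g = σ := sortOf_unsort σ S hr hsub hcard hd
  have hval : ∀ (j : ℕ) (h : j < n), (g (σ ⟨j, h⟩) : ℕ) = (S.filter (· < j)).card := by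
    intro j h
    show (S.filter (· < ((σ.symm (σ ⟨j, h⟩) : Fin n) : ℕ))).card = _
    rw [Equiv.symm_apply_apply]
  ext x
  constructor
  · intro hx
    have hx1 := Finset.mem_range.mp (barSet_subset g hx)
    have hxn : x + 1 < n := by omega
    have hne := (mem_barSet_iff g hxn).mp hx
    rw [hσ] at hne
    by_contra hxS
    apply hne
    apply Fin.ext
    rw [hval (x + 1) hxn, hval x (Nat.lt_of_succ_lt hxn), filter_lt_succ_card, if_neg hxS]
    omega
  · intro hxS
    have hx1 := Finset.mem_range.mp (hsub hxS)
    have hxn : x + 1 < n := by omega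
    rw [mem_barSet_iff g hxn, hσ]
    intro heq
    have h2 := congrArg Fin.val heq
    rw [hval (x + 1) hxn, hval x (Nat.lt_of_succ_lt hxn), filter_lt_succ_card,
      if_pos hxS] at h2
    omega

private lemma unsort_sortOf (f : Fin n → Fin r) (hf : Function.Surjective f)
    (hn : 0 < n) (hr : 0 < r) :
    unsort (sortOf f) (barSet f) hr (barSet_card f hf hn hr) = f := by
  funext i
  apply Fin.ext
  have hlt : (((sortOf f).symm i : Fin n) : ℕ) < n := ((sortOf f).symm i).isLt
  have h1 := sort_val f hf hr (((sortOf f).symm i : Fin n) : ℕ) hlt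
  show ((barSet f).filter (· < (((sortOf f).symm i : Fin n) : ℕ))).card = (f i : ℕ)
  rw [← h1]
  congr 1
  have h2 : (⟨(((sortOf f).symm i : Fin n) : ℕ), hlt⟩ : Fin n) = (sortOf f).symm i := rfl
  rw [h2, Equiv.apply_symm_apply]

end TypeA

section TypeA2

variable {n r : ℕ}

private lemma desA_eq_dSet_card (σ : Equiv.Perm (Fin n)) : desA σ = (dSet σ).card := rfl

private lemma desA_lt (hn : 0 < n) (σ : Equiv.Perm (Fin n)) : desA σ < n := by
  have h1 : (dSet σ).card ≤ (Finset.range (n - 1)).card :=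
    Finset.card_le_card (dSet_subset σ)
  rw [Finset.card_range] at h1
  rw [desA_eq_dSet_card]
  omega

private lemma count_supersets (m : ℕ) (D U : Finset ℕ) (hDU : D ⊆ U) :
    (U.powerset.filter fun S => D ⊆ S ∧ S.card = m).card
      = if D.card ≤ m then (U.card - D.card).choose (m - D.card) else 0 := by
  classical
  split_ifs with h
  · rw [← Finset.card_sdiff_of_subset hDU, ← Finset.card_powersetCard (m - D.card) (U \ D)]
    refine Finset.card_bij' (fun S _ => S \ D) (fun S' _ => S' ∪ D) ?hi ?hj ?left ?right
    case hi =>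
      intro S hS
      rw [Finset.mem_filter, Finset.mem_powerset] at hS
      obtain ⟨hSU, hDS, hSc⟩ := hS
      rw [Finset.mem_powersetCard]
      refine ⟨Finset.sdiff_subset_sdiff hSU (Finset.Subset.refl D), ?_⟩
      rw [Finset.card_sdiff_of_subset hDS, hSc]
    · intro S' hS'
      rw [Finset.mem_powersetCard] at hS'
      obtain ⟨hsub, hc⟩ := hS'
      have hdisj : Disjoint S' D := by
        rw [Finset.disjoint_left]
        intro a ha hD
        exact (Finset.mem_sdiff.mp (hsub ha)).2 hD
      rw [Finset.mem_filter, Finset.mem_powerset]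
      refine ⟨Finset.union_subset (hsub.trans Finset.sdiff_subset) hDU,
        Finset.subset_union_right, ?_⟩
      rw [Finset.card_union_of_disjoint hdisj, hc]
      omega
    case left =>
      intro S hS
      rw [Finset.mem_filter, Finset.mem_powerset] at hS
      exact Finset.sdiff_union_of_subset hS.2.1
    case right =>
      intro S' hS'
      rw [Finset.mem_powersetCard] at hS'
      ext x
      simp only [Finset.mem_sdiff, Finset.mem_union]
      constructor
      · rintro ⟨hx | hx, hxD⟩
        · exact hx
        · exact absurd hx hxD
      · intro hx
        exact ⟨Or.inl hx, fun hD => (Finset.mem_sdiff.mp (hS'.1 hx)).2 hD⟩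
  · rw [Finset.card_eq_zero, Finset.filter_eq_empty_iff]
    intro S hS
    rintro ⟨h1, h2⟩
    exact h (h2 ▸ Finset.card_le_card h1)

private lemma fiber_card_B (hn : 0 < n) (hr : 0 < r) (σ : Equiv.Perm (Fin n)) :
    ((Finset.univ : Finset {f : Fin n → Fin r // Function.Surjective f}).filter
        (fun f => sortOf f.1 = σ)).card
      = ((Finset.range (n - 1)).powerset.filter fun S =>
          dSet σ ⊆ S ∧ S.card = r - 1).card := by
  classical
  refine Finset.card_bij' (fun f _ => barSet f.1)
    (fun S hS => ⟨unsort σ S hr (Finset.mem_filter.mp hS).2.2,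
      unsort_surjective σ S hr hn
        (Finset.mem_powerset.mp (Finset.mem_filter.mp hS).1)
        (Finset.mem_filter.mp hS).2.2⟩) ?hi ?hj ?left ?right
  case hi =>
    intro f hf
    have hσ : sortOf f.1 = σ := (Finset.mem_filter.mp hf).2
    rw [Finset.mem_filter, Finset.mem_powerset]
    exact ⟨barSet_subset f.1, hσ ▸ dSet_subset_barSet f.1, barSet_card f.1 f.2 hn hr⟩
  case hj =>
    intro S hS
    rw [Finset.mem_filter]
    exact ⟨Finset.mem_univ _,
      sortOf_unsort σ S hr (Finset.mem_powerset.mp (Finset.mem_filter.mp hS).1)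
        (Finset.mem_filter.mp hS).2.2 (Finset.mem_filter.mp hS).2.1⟩
  case left =>
    intro f hf
    have hσ : sortOf f.1 = σ := (Finset.mem_filter.mp hf).2
    apply Subtype.ext
    dsimp only
    subst hσ
    exact unsort_sortOf f.1 f.2 hn hr
  case right =>
    intro S hS
    dsimp only
    exact barSet_unsort σ S hr (Finset.mem_powerset.mp (Finset.mem_filter.mp hS).1)
      (Finset.mem_filter.mp hS).2.2 (Finset.mem_filter.mp hS).2.1

private lemma eulA_card (d : ℕ) :
    EulA n (d + 1)
      = ((Finset.univ : Finset (Equiv.Perm (Fin n))).filter fun σ => desA σ = d).card := by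
  classical
  rw [EulA, if_neg (Nat.succ_ne_zero d), Nat.card_eq_fintype_card, Fintype.card_subtype]
  simp

private lemma cardB (hn : 0 < n) (hr : 0 < r) (hrn : r ≤ n) :
    Nat.card {f : Fin n → Fin r // Function.Surjective f}
      = ∑ k ∈ Finset.range (r + 1), EulA n k * Nat.choose (n - k) (r - k) := by
  classical
  rw [Nat.card_eq_fintype_card, ← Finset.card_univ]
  rw [Finset.card_eq_sum_card_fiberwise
    (f := fun f : {f : Fin n → Fin r // Function.Surjective f} => sortOf f.1)
    (t := Finset.univ) (fun _ _ => Finset.mem_univ _)]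
  have hterm : ∀ σ : Equiv.Perm (Fin n),
      ((Finset.univ : Finset {f : Fin n → Fin r // Function.Surjective f}).filter
        (fun f => sortOf f.1 = σ)).card
      = if desA σ ≤ r - 1 then (n - 1 - desA σ).choose (r - 1 - desA σ) else 0 := by
    intro σ
    rw [fiber_card_B hn hr σ,
      count_supersets (r - 1) (dSet σ) (Finset.range (n - 1)) (dSet_subset σ),
      Finset.card_range, ← desA_eq_dSet_card]
  calc (∑ σ ∈ (Finset.univ : Finset (Equiv.Perm (Fin n))),
        ((Finset.univ : Finset {f : Fin n → Fin r // Function.Surjective f}).filter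
          (fun f => sortOf f.1 = σ)).card)
      = ∑ σ ∈ (Finset.univ : Finset (Equiv.Perm (Fin n))),
          (if desA σ ≤ r - 1 then (n - 1 - desA σ).choose (r - 1 - desA σ) else 0) :=
        Finset.sum_congr rfl fun σ _ => hterm σ
    _ = ∑ d ∈ Finset.range n,
          ∑ σ ∈ Finset.univ.filter (fun σ : Equiv.Perm (Fin n) => desA σ = d),
            (if desA σ ≤ r - 1 then (n - 1 - desA σ).choose (r - 1 - desA σ) else 0) :=
        (Finset.sum_fiberwise_of_maps_to
          (fun σ _ => Finset.mem_range.mpr (desA_lt hn σ)) _).symm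
    _ = ∑ d ∈ Finset.range n,
          (Finset.univ.filter (fun σ : Equiv.Perm (Fin n) => desA σ = d)).card *
            (if d ≤ r - 1 then (n - 1 - d).choose (r - 1 - d) else 0) := by
        refine Finset.sum_congr rfl fun d _ => ?_
        rw [Finset.sum_congr rfl (fun σ hσ => by
          rw [(Finset.mem_filter.mp hσ).2]), Finset.sum_const, smul_eq_mul]
    _ = ∑ d ∈ Finset.range r,
          (Finset.univ.filter (fun σ : Equiv.Perm (Fin n) => desA σ = d)).card *
            (if d ≤ r - 1 then (n - 1 - d).choose (r - 1 - d) else 0) :=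
        (Finset.sum_subset (Finset.range_subset_range.mpr hrn) (fun d _ hd2 => by
          rw [if_neg (by have := Finset.mem_range.not.mp hd2; omega), mul_zero])).symm
    _ = ∑ d ∈ Finset.range r,
          (Finset.univ.filter (fun σ : Equiv.Perm (Fin n) => desA σ = d)).card *
            ((n - 1 - d).choose (r - 1 - d)) := by
        refine Finset.sum_congr rfl fun d hd => ?_
        rw [if_pos (by have := Finset.mem_range.mp hd; omega)]
    _ = ∑ k ∈ Finset.range (r + 1), EulA n k * Nat.choose (n - k) (r - k) := by
        rw [Finset.sum_range_succ']
        have h0 : EulA n 0 * Nat.choose (n - 0) (r - 0) = 0 := by simp [EulA]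
        rw [h0, add_zero]
        refine Finset.sum_congr rfl fun d _ => ?_
        have e1 : n - (d + 1) = n - 1 - d := by omega
        have e2 : r - (d + 1) = r - 1 - d := by omega
        rw [e1, e2, eulA_card d]

end TypeA2

section TypeA3

variable {n r : ℕ}

private noncomputable def fiberPartition (f : Fin n → Fin r) :
    Finpartition (Finset.univ : Finset (Fin n)) :=
  Finpartition.ofSetoid (Setoid.ker f)

private lemma mem_part_fiberPartition (f : Fin n → Fin r) (a b : Fin n) :
    b ∈ (fiberPartition f).part a ↔ f a = f b := by
  rw [fiberPartition, Finpartition.mem_part_ofSetoid_iff_rel]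
  exact Setoid.ker_def

private lemma parts_eq_image_part (P : Finpartition (Finset.univ : Finset (Fin n))) :
    P.parts = Finset.univ.image P.part := by
  classical
  ext C
  simp only [Finset.mem_image]
  constructor
  · intro hC
    obtain ⟨x, hx⟩ := P.nonempty_of_mem_parts hC
    exact ⟨x, Finset.mem_univ x, P.part_eq_of_mem hC hx⟩
  · rintro ⟨x, -, rfl⟩
    exact P.part_mem.2 (Finset.mem_univ x)

private lemma finpartition_eq_of_part_eq {P Q : Finpartition (Finset.univ : Finset (Fin n))}
    (h : ∀ a, P.part a = Q.part a) : P = Q := by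
  apply Finpartition.ext
  rw [parts_eq_image_part P, parts_eq_image_part Q]
  exact Finset.image_congr fun a _ => h a

private lemma fiberPartition_parts_card (f : Fin n → Fin r) (hf : Function.Surjective f) :
    (fiberPartition f).parts.card = r := by
  classical
  have hparts : (fiberPartition f).parts
      = Finset.univ.image fun j : Fin r => Finset.univ.filter fun b => f b = j := by
    rw [parts_eq_image_part]
    ext C
    simp only [Finset.mem_image, Finset.mem_univ, true_and]
    constructor
    · rintro ⟨a, rfl⟩
      refine ⟨f a, ?_⟩
      ext b
      simp only [Finset.mem_filter, Finset.mem_univ, true_and]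
      rw [mem_part_fiberPartition]
      exact eq_comm
    · rintro ⟨j, rfl⟩
      obtain ⟨a, rfl⟩ := hf j
      refine ⟨a, ?_⟩
      ext b
      simp only [Finset.mem_filter, Finset.mem_univ, true_and]
      rw [mem_part_fiberPartition]
      exact eq_comm
  have hinj : Function.Injective fun j : Fin r => Finset.univ.filter fun b => f b = j := by
    intro j j' hjj
    dsimp only at hjj
    obtain ⟨b, hb⟩ := hf j
    have hbmem : b ∈ Finset.univ.filter fun b => f b = j := by simp [hb]
    rw [hjj] at hbmem
    have h2 := (Finset.mem_filter.mp hbmem).2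
    rwa [hb] at h2
  rw [hparts, Finset.card_image_of_injective _ hinj, Finset.card_univ, Fintype.card_fin]

private lemma keyfact (f : Fin n → Fin r) (P : Finpartition (Finset.univ : Finset (Fin n)))
    (hfP : fiberPartition f = P) (a b : Fin n) : f a = f b ↔ P.part a = P.part b :=
  calc f a = f b ↔ b ∈ (fiberPartition f).part a := (mem_part_fiberPartition f a b).symm
    _ ↔ (fiberPartition f).part b = (fiberPartition f).part a :=
        (fiberPartition f).mem_part_iff_part_eq_part (Finset.mem_univ b) (Finset.mem_univ a)
    _ ↔ P.part b = P.part a := by rw [hfP]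
    _ ↔ P.part a = P.part b := eq_comm

private lemma fiber_card_A (hr : 0 < r) (P : Finpartition (Finset.univ : Finset (Fin n)))
    (hP : P.parts.card = r) :
    ((Finset.univ : Finset {f : Fin n → Fin r // Function.Surjective f}).filter
        (fun f => fiberPartition f.1 = P)).card = r.factorial := by
  classical
  rw [← Fintype.card_subtype]
  have hpartval : ∀ C : ↥P.parts, P.part ((P.nonempty_of_mem_parts C.2).choose) = C.1 :=
    fun C => P.part_eq_of_mem C.2 (P.nonempty_of_mem_parts C.2).choose_spec
  have e : {f : {f : Fin n → Fin r // Function.Surjective f} // fiberPartition f.1 = P}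
      ≃ (↥P.parts ↪ Fin r) := by
    refine
      { toFun := fun f => ⟨fun C => f.1.1 ((P.nonempty_of_mem_parts C.2).choose), ?_⟩
        invFun := fun g => ⟨⟨fun i => g ⟨P.part i, P.part_mem.2 (Finset.mem_univ i)⟩, ?_⟩, ?_⟩
        left_inv := ?_
        right_inv := ?_ }
    · -- injectivity
      intro C C' hCC'
      have h1 := (keyfact f.1.1 P f.2 _ _).mp hCC'
      rw [hpartval C, hpartval C'] at h1
      exact Subtype.ext h1
    · -- surjectivity
      intro j
      have hgbij : Function.Bijective g :=
        (Fintype.bijective_iff_injective_and_card g).mpr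
          ⟨g.injective, by rw [Fintype.card_coe, hP, Fintype.card_fin]⟩
      obtain ⟨C, hC⟩ := hgbij.2 j
      refine ⟨(P.nonempty_of_mem_parts C.2).choose, ?_⟩
      exact (congrArg g (Subtype.ext (hpartval C))).trans hC
    · -- fiberPartition = P
      apply finpartition_eq_of_part_eq
      intro a
      ext b
      rw [mem_part_fiberPartition]
      constructor
      · intro hg
        have h1 : P.part a = P.part b := congrArg Subtype.val (g.injective hg)
        exact (P.mem_part_iff_part_eq_part (Finset.mem_univ b) (Finset.mem_univ a)).mpr h1.symm
      · intro hb
        have h1 : P.part b = P.part a :=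
          (P.mem_part_iff_part_eq_part (Finset.mem_univ b) (Finset.mem_univ a)).mp hb
        exact congrArg g (Subtype.ext h1.symm)
    · -- left_inv
      intro f
      apply Subtype.ext
      apply Subtype.ext
      funext i
      show f.1.1 ((P.nonempty_of_mem_parts (P.part_mem.2 (Finset.mem_univ i))).choose) = f.1.1 i
      exact (keyfact f.1.1 P f.2 _ _).mpr
        (hpartval ⟨P.part i, P.part_mem.2 (Finset.mem_univ i)⟩)
    · -- right_inv
      intro g
      apply DFunLike.ext
      intro C
      exact congrArg g (Subtype.ext (hpartval C))
  rw [Fintype.card_congr e, Fintype.card_embedding_eq, Fintype.card_coe, hP,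
    Fintype.card_fin, Nat.descFactorial_self]

private lemma cardA (hn : 0 < n) (hr : 0 < r) :
    Nat.card {f : Fin n → Fin r // Function.Surjective f} = r.factorial * Stir n r := by
  classical
  haveI : Finite (Finpartition (Finset.univ : Finset (Fin n))) :=
    Finite.of_injective (fun P => P.parts) fun P Q h => Finpartition.ext h
  haveI : Fintype (Finpartition (Finset.univ : Finset (Fin n))) := Fintype.ofFinite _
  rw [Nat.card_eq_fintype_card, ← Finset.card_univ]
  rw [Finset.card_eq_sum_card_fiberwise
    (f := fun f : {f : Fin n → Fin r // Function.Surjective f} => fiberPartition f.1)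
    (t := Finset.univ.filter fun P => P.parts.card = r)
    (fun f _ => Finset.mem_filter.mpr ⟨Finset.mem_univ _, fiberPartition_parts_card f.1 f.2⟩)]
  rw [Finset.sum_congr rfl (fun P hP => fiber_card_A hr P (Finset.mem_filter.mp hP).2),
    Finset.sum_const, smul_eq_mul, mul_comm]
  congr 1
  rw [show Stir n r
      = Nat.card {P : Finpartition (Finset.univ : Finset (Fin n)) // P.parts.card = r} from rfl,
    Nat.card_eq_fintype_card, Fintype.card_subtype]

end TypeA3

/-- `r! · S(n,r) = Σ_{k=0}^{r} A(n,k) · C(n−k, r−k)`. -/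
theorem stirling_eulerian_typeA (n r : ℕ) (hn : 1 ≤ n) (hr : r ≤ n) :
    Nat.factorial r * Stir n r =
      ∑ k ∈ Finset.range (r + 1), EulA n k * Nat.choose (n - k) (r - k) := by
  rcases Nat.eq_zero_or_pos r with rfl | hrpos
  · have h1 : Stir n 0 = 0 := by
      have hE : IsEmpty {P : Finpartition (Finset.univ : Finset (Fin n)) // P.parts.card = 0} := by
        constructor
        rintro ⟨P, hP⟩
        rw [Finset.card_eq_zero, Finpartition.parts_eq_empty_iff, Finset.bot_eq_empty,
          Finset.univ_eq_empty_iff] at hP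
        exact hP.false ⟨0, hn⟩
      exact Nat.card_of_isEmpty
    rw [h1]
    simp [EulA]
  · rw [← cardA hn hrpos]
    exact cardB hn hrpos hr
end
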